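/- arXiv:1906.07271 — 10 statements merged into one kernel-verified Lean document; each statement's English description precedes it below -/
import Mathlib

section
/- Let K be a field, X a finite nonempty alphabet, and S : X* → K a series admitting an unambiguous linear representation. Then S is Hadamard sub-invertible, i.e. the series S' : X* → K defined by S'(w) = S(w)⁻¹ for w with S(w) ≠ 0 and S'(w) = 0 otherwise is rational. -/
open scoped Classical

/-- Product of the matrices `μ x` along the word `w`. -/
def wordProd {X K : Type*} [Semiring K] {n : ℕ} (μ : X → Matrix (Fin n) (Fin n) K)
    (w : List X) : Matrix (Fin n) (Fin n) K :=
  (w.map μ).prod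

/-- `(u, μ, v)` is a linear representation of the series `S : X* → K`. -/
def IsLinRep {X K : Type*} [Semiring K] {n : ℕ} (S : List X → K)
    (u : Fin n → K) (μ : X → Matrix (Fin n) (Fin n) K) (v : Fin n → K) : Prop :=
  ∀ w : List X, S w = dotProduct u (Matrix.mulVec (wordProd μ w) v)

/-- A series is rational if it admits a linear representation. -/
def IsRational {X K : Type*} [Semiring K] (S : List X → K) : Prop :=
  ∃ (n : ℕ) (u : Fin n → K) (μ : X → Matrix (Fin n) (Fin n) K) (v : Fin n → K),
    IsLinRep S u μ v

/-- `p` is an accepting path for the word `w` in the weighted automaton associated to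
`(u, μ, v)`. -/
def IsAcceptingPath {X K : Type*} [Semiring K] {n : ℕ}
    (u : Fin n → K) (μ : X → Matrix (Fin n) (Fin n) K) (v : Fin n → K)
    (w : List X) (p : Fin (w.length + 1) → Fin n) : Prop :=
  u (p 0) ≠ 0 ∧
  (∀ i : Fin w.length, μ (w.get i) (p i.castSucc) (p i.succ) ≠ 0) ∧
  v (p (Fin.last w.length)) ≠ 0

/-- The linear representation `(u, μ, v)` is unambiguous: every word labels at most one
accepting path. -/
def IsUnambiguous {X K : Type*} [Semiring K] {n : ℕ}
    (u : Fin n → K) (μ : X → Matrix (Fin n) (Fin n) K) (v : Fin n → K) : Prop :=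
  ∀ (w : List X) (p q : Fin (w.length + 1) → Fin n),
    IsAcceptingPath u μ v w p → IsAcceptingPath u μ v w q → p = q

/-- `S` is a Pólya series: its nonzero coefficients lie in a finitely generated subgroup
of `Kˣ`. -/
def IsPolya {X K : Type*} [Field K] (S : List X → K) : Prop :=
  ∃ G : Subgroup Kˣ, G.FG ∧ ∀ w : List X, S w = 0 ∨ ∃ g ∈ G, (g : K) = S w

/-- The linear representation is deterministic: at most one initial state, and every row
of each `μ x` has at most one nonzero entry. -/
def IsDeterministic {X K : Type*} [Semiring K] {n : ℕ}
    (u : Fin n → K) (μ : X → Matrix (Fin n) (Fin n) K) : Prop :=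
  (∀ i j : Fin n, u i ≠ 0 → u j ≠ 0 → i = j) ∧
  ∀ (x : X) (p q q' : Fin n), μ x p q ≠ 0 → μ x p q' ≠ 0 → q = q'

/-- Minimal linear representation: no linear representation of `S` has smaller rank. -/
def IsMinimalRep {X K : Type*} [Semiring K] {n : ℕ} (S : List X → K)
    (u : Fin n → K) (μ : X → Matrix (Fin n) (Fin n) K) (v : Fin n → K) : Prop :=
  IsLinRep S u μ v ∧
  ∀ (m : ℕ) (u' : Fin m → K) (μ' : X → Matrix (Fin m) (Fin m) K) (v' : Fin m → K),
    IsLinRep S u' μ' v' → n ≤ m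

/-- The set `Ω = {u · μ(w) : w ∈ X*}` is contained in a finite union of subspaces of
dimension at most 1, i.e. the linear hull has dimension at most 1. -/
def HullDimLE1 {X K : Type*} [Field K] {n : ℕ}
    (u : Fin n → K) (μ : X → Matrix (Fin n) (Fin n) K) : Prop :=
  ∃ (k : ℕ) (W : Fin k → Submodule K (Fin n → K)),
    (∀ i, Module.finrank K (W i) ≤ 1) ∧
    ∀ w : List X, ∃ i, Matrix.vecMul u (wordProd μ w) ∈ W i



noncomputable def pathWeight {X K : Type*} [Field K] {n : ℕ}
    (u : Fin n → K) (μ : X → Matrix (Fin n) (Fin n) K) (v : Fin n → K)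
    (w : List X) (p : Fin (w.length + 1) → Fin n) : K :=
  u (p 0) * (∏ i : Fin w.length, μ (w.get i) (p i.castSucc) (p i.succ)) *
    v (p (Fin.last w.length))

lemma dot_eq_sum {X K : Type*} [Field K] {n : ℕ} (μ : X → Matrix (Fin n) (Fin n) K) :
    ∀ (w : List X) (f v : Fin n → K),
      dotProduct f (Matrix.mulVec (wordProd μ w) v) =
        ∑ p : Fin (w.length + 1) → Fin n, pathWeight f μ v w p := by
  intro w
  induction w with
  | nil =>
      intro f v
      simp only [List.length_nil]
      rw [Fintype.sum_equiv (Equiv.funUnique (Fin 1) (Fin n))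
        (fun p => pathWeight f μ v [] p) (fun a => f a * v a)
        (fun p => by simp [pathWeight, Equiv.funUnique])]
      simp [wordProd, dotProduct, Matrix.mulVec, Matrix.one_apply]
  | cons x t ih =>
      intro f v
      have h1 : wordProd μ (x :: t) = μ x * wordProd μ t := by
        simp [wordProd]
      rw [h1, ← Matrix.mulVec_mulVec, Matrix.dotProduct_mulVec, ih]
      simp only [List.length_cons]
      rw [← (Fin.consEquiv (fun _ : Fin (t.length + 1 + 1) => Fin n)).sum_comp]
      rw [Fintype.sum_prod_type]
      rw [Finset.sum_comm]
      congr 1; funext q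
      have hvm : ∀ j, Matrix.vecMul f (μ x) j = ∑ a, f a * μ x a j := by
        intro j; simp [Matrix.vecMul, dotProduct]
      rw [pathWeight, hvm, Finset.sum_mul, Finset.sum_mul]
      congr 1; funext a
      show f a * μ x a (q 0) * _ * v (q (Fin.last t.length)) =
        pathWeight f μ v (x :: t) (Fin.consEquiv _ (a, q))
      rw [pathWeight]
      have hget : ∀ j : Fin t.length, (x :: t).get j.succ = t.get j := fun j => rfl
      simp only [Fin.consEquiv_apply, List.length_cons]
      rw [Fin.prod_univ_succ, ← Fin.succ_last, Fin.cons_succ]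
      simp only [Fin.castSucc_zero, Fin.cons_zero, Fin.cons_succ, ← Fin.succ_castSucc, hget]
      have hget0 : (x :: t).get (0 : Fin (t.length + 1)) = x := rfl
      rw [hget0]
      ring

lemma accepting_of_pathWeight_ne_zero' {X K : Type*} [Field K] {n : ℕ}
    {u : Fin n → K} {μ : X → Matrix (Fin n) (Fin n) K} {v : Fin n → K}
    {w : List X} {p : Fin (w.length + 1) → Fin n}
    (h : pathWeight u μ v w p ≠ 0) :
    (u (p 0) ≠ 0) ∧ (∀ i : Fin w.length, μ (w.get i) (p i.castSucc) (p i.succ) ≠ 0) ∧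
      v (p (Fin.last w.length)) ≠ 0 := by
  rw [pathWeight] at h
  refine ⟨fun h0 => h (by rw [h0]; ring), fun i h0 => h ?_, fun h0 => h (by rw [h0]; ring)⟩
  rw [Finset.prod_eq_zero (Finset.mem_univ i) h0]
  ring

lemma pathWeight_inv' {X K : Type*} [Field K] {n : ℕ}
    (u : Fin n → K) (μ : X → Matrix (Fin n) (Fin n) K) (v : Fin n → K)
    (w : List X) (p : Fin (w.length + 1) → Fin n) :
    pathWeight (fun i => (u i)⁻¹) (fun x => Matrix.of fun i j => (μ x i j)⁻¹)
      (fun i => (v i)⁻¹) w p = (pathWeight u μ v w p)⁻¹ := by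
  simp only [pathWeight, mul_inv, Finset.prod_inv_distrib, Matrix.of_apply]


lemma hadamard_key {K X : Type*} [Field K] [Fintype X] [Nonempty X]
    (S : List X → K)
    (hrep : ∃ (n : ℕ) (u : Fin n → K) (μ : X → Matrix (Fin n) (Fin n) K) (v : Fin n → K),
      (∀ w : List X, S w = dotProduct u (Matrix.mulVec (wordProd μ w) v)) ∧
      ∀ (w : List X) (p q : Fin (w.length + 1) → Fin n),
        ((u (p 0) ≠ 0) ∧ (∀ i : Fin w.length, μ (w.get i) (p i.castSucc) (p i.succ) ≠ 0) ∧
          v (p (Fin.last w.length)) ≠ 0) →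
        ((u (q 0) ≠ 0) ∧ (∀ i : Fin w.length, μ (w.get i) (q i.castSucc) (q i.succ) ≠ 0) ∧
          v (q (Fin.last w.length)) ≠ 0) → p = q) :
    ∃ (n : ℕ) (u : Fin n → K) (μ : X → Matrix (Fin n) (Fin n) K) (v : Fin n → K),
      ∀ w : List X, (if S w ≠ 0 then (S w)⁻¹ else 0) =
        dotProduct u (Matrix.mulVec (wordProd μ w) v) := by
  obtain ⟨n, u, μ, v, hlin, hunamb⟩ := hrep
  set u' : Fin n → K := fun i => (u i)⁻¹ with hu'
  set μ' : X → Matrix (Fin n) (Fin n) K := fun x => Matrix.of fun i j => (μ x i j)⁻¹ with hμ'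
  set v' : Fin n → K := fun i => (v i)⁻¹ with hv'
  refine ⟨n, u', μ', v', fun w => ?_⟩
  rw [dot_eq_sum μ' w u' v']
  have hs : S w = ∑ p : Fin (w.length + 1) → Fin n, pathWeight u μ v w p := by
    rw [hlin w, dot_eq_sum]
  have hinv : ∀ p, pathWeight u' μ' v' w p = (pathWeight u μ v w p)⁻¹ :=
    fun p => pathWeight_inv' u μ v w p
  have hacc' : ∀ p, pathWeight u' μ' v' w p ≠ 0 →
      ((u (p 0) ≠ 0) ∧ (∀ i : Fin w.length, μ (w.get i) (p i.castSucc) (p i.succ) ≠ 0) ∧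
        v (p (Fin.last w.length)) ≠ 0) := by
    intro p hp
    rw [hinv p, ne_eq, inv_eq_zero] at hp
    exact accepting_of_pathWeight_ne_zero' hp
  by_cases hac : ∃ p : Fin (w.length + 1) → Fin n,
      (u (p 0) ≠ 0) ∧ (∀ i : Fin w.length, μ (w.get i) (p i.castSucc) (p i.succ) ≠ 0) ∧
        v (p (Fin.last w.length)) ≠ 0
  · obtain ⟨p₀, hp₀⟩ := hac
    have hW0 : ∀ q ∈ Finset.univ, q ≠ p₀ → pathWeight u μ v w q = 0 := by
      intro q _ hq
      by_contra h
      exact hq (hunamb w q p₀ (accepting_of_pathWeight_ne_zero' h) hp₀)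
    have hSw : S w = pathWeight u μ v w p₀ := by
      rw [hs]; exact Finset.sum_eq_single p₀ hW0 (by simp)
    have hne : pathWeight u μ v w p₀ ≠ 0 :=
      mul_ne_zero (mul_ne_zero hp₀.1 (Finset.prod_ne_zero_iff.2 fun i _ => hp₀.2.1 i)) hp₀.2.2
    have hW0' : ∀ q ∈ Finset.univ, q ≠ p₀ → pathWeight u' μ' v' w q = 0 := by
      intro q _ hq
      by_contra h
      exact hq (hunamb w q p₀ (hacc' q h) hp₀)
    rw [Finset.sum_eq_single p₀ hW0' (by simp), hinv p₀, if_pos (hSw ▸ hne), hSw]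
  · push_neg at hac
    have h1 : S w = 0 := by
      rw [hs]
      refine Finset.sum_eq_zero fun p _ => ?_
      by_contra h
      exact absurd (accepting_of_pathWeight_ne_zero' h) (by push_neg; exact fun a b => (hac p a b))
    have h2 : ∑ p : Fin (w.length + 1) → Fin n, pathWeight u' μ' v' w p = 0 := by
      refine Finset.sum_eq_zero fun p _ => ?_
      by_contra h
      exact absurd (hacc' p h) (by push_neg; exact fun a b => (hac p a b))
    rw [h2]
    simp [h1]

/-- Every series admitting an unambiguous linear representation is Hadamard
sub-invertible. -/
theorem unambiguous_hadamardSubInvertible {K X : Type*} [Field K] [Fintype X] [Nonempty X]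
    (S : List X → K)
    (hrep : ∃ (n : ℕ) (u : Fin n → K) (μ : X → Matrix (Fin n) (Fin n) K) (v : Fin n → K),
      IsLinRep S u μ v ∧ IsUnambiguous u μ v) :
    IsRational (fun w => if S w ≠ 0 then (S w)⁻¹ else 0) := by
  obtain ⟨n, u, μ, v, hlin, hunamb⟩ := hrep
  obtain ⟨m, u', μ', v', h⟩ := hadamard_key S ⟨n, u, μ, v, hlin, hunamb⟩
  exact ⟨m, u', μ', v', h⟩
end

section
/- Let R be a domain with fraction field K and X a finite nonempty alphabet. Let S : X* → R be a series admitting an unambiguous linear representation with all entries of u, v, and all μ(x) in R. Then there exist k ≥ 0, elements λ₁, …, λ_k ∈ R \ {0}, linearly bounded rational ℤ-series a₁, …, a_k : X* → ℤ, and a regular language L ⊆ X* such that supp(aᵢ) ⊆ L for all i, S(w) = λ₁^{a₁(w)} ⋯ λ_k^{a_k(w)} (an identity in K, with integer exponents) for all w ∈ L, and S(w) = 0 for all w ∉ L. -/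
/-- A language is regular if it is accepted by a (finite) deterministic automaton. -/
def RegularLang {X : Type*} (L : Language X) : Prop :=
  ∃ (σ : Type) (_ : Fintype σ) (M : DFA X σ), M.accepts = L

/-- An integer-valued series is linearly bounded if `|a(w)| ≤ C·|w|` for all nonempty
words `w`. -/
def LinearlyBounded {X : Type*} (a : List X → ℤ) : Prop :=
  ∃ C : ℕ, ∀ w : List X, w ≠ [] → |a w| ≤ (C : ℤ) * w.length

open Matrix Finset
open scoped Classical

set_option linter.unusedSectionVars false
set_option maxHeartbeats 1000000

/-! ### Path sums -/

section PathSum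
variable {X K σ : Type*} [CommSemiring K] [Fintype σ] [DecidableEq σ]

/-- word product for general state type -/
def wprod (μ : X → Matrix σ σ K) (w : List X) : Matrix σ σ K := (w.map μ).prod

lemma wprod_nil (μ : X → Matrix σ σ K) : wprod μ [] = 1 := rfl

lemma wprod_cons (μ : X → Matrix σ σ K) (x : X) (w : List X) :
    wprod μ (x :: w) = μ x * wprod μ w := by
  simp [wprod]

/-- transition product along a path -/
def trW (μ : X → Matrix σ σ K) (w : List X) (p : Fin (w.length + 1) → σ) : K :=
  ∏ i : Fin w.length, μ (w.get i) (p i.castSucc) (p i.succ)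

lemma trW_nil (μ : X → Matrix σ σ K) (p : Fin 1 → σ) : trW μ [] p = 1 := by
  simp [trW]

lemma trW_cons (μ : X → Matrix σ σ K) (x : X) (w : List X) (i : σ)
    (q : Fin (w.length + 1) → σ) :
    trW μ (x :: w) (Fin.cons i q) = μ x i (q 0) * trW μ w q := by
  have h : trW μ (x :: w) (Fin.cons i q)
      = ∏ j : Fin (w.length + 1), μ ((x :: w).get j)
          ((Fin.cons i q : Fin (w.length + 1 + 1) → σ) j.castSucc)
          ((Fin.cons i q : Fin (w.length + 1 + 1) → σ) j.succ) := rfl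
  rw [h, Fin.prod_univ_succ]
  congr 1

lemma sum_paths_succ {M : Type*} [AddCommMonoid M] (l : ℕ)
    (F : (Fin (l + 1 + 1) → σ) → M) :
    ∑ p : Fin (l + 1 + 1) → σ, F p = ∑ i : σ, ∑ q : Fin (l + 1) → σ, F (Fin.cons i q) := by
  rw [← Equiv.sum_comp (Fin.consEquiv (fun _ : Fin (l + 1 + 1) => σ)) F, Fintype.sum_prod_type]
  rfl

/-- the path-sum expansion of a linear representation -/
lemma pathSum (μ : X → Matrix σ σ K) (v : σ → K) :
    ∀ (w : List X) (u : σ → K),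
      dotProduct u (Matrix.mulVec (wprod μ w) v)
        = ∑ p : Fin (w.length + 1) → σ, u (p 0) * trW μ w p * v (p (Fin.last w.length))
  | [], u => by
    rw [wprod_nil, Matrix.one_mulVec]
    show dotProduct u v = ∑ p : Fin 1 → σ, u (p 0) * trW (X := X) μ [] p * v (p 0)
    rw [← Equiv.sum_comp (Equiv.funUnique (Fin 1) σ).symm]
    simp [dotProduct, trW]
  | x :: w, u => by
    rw [wprod_cons, ← Matrix.mulVec_mulVec, Matrix.dotProduct_mulVec, pathSum μ v w]
    refine Eq.trans ?_ (sum_paths_succ w.length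
      (fun p => u (p 0) * trW μ (x :: w) p * v (p (Fin.last (x :: w).length)))).symm
    rw [Finset.sum_comm]
    apply Finset.sum_congr rfl
    intro q _
    rw [show (u ᵥ* μ x) (q 0) = ∑ i, u i * μ x i (q 0) from rfl]
    rw [Finset.sum_mul, Finset.sum_mul]
    apply Finset.sum_congr rfl
    intro i _
    rw [trW_cons]
    have h1 : (Fin.cons i q : Fin (w.length + 1 + 1) → σ) 0 = i := rfl
    have h2 : (Fin.cons i q : Fin (w.length + 1 + 1) → σ) (Fin.last (x :: w).length) =
        q (Fin.last w.length) := by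
      show (Fin.cons i q : Fin (w.length + 1 + 1) → σ) (Fin.last (w.length + 1)) =
        q (Fin.last w.length)
      rw [← Fin.succ_last, Fin.cons_succ]
    rw [h1, h2]
    ring

/-- a linear representation over any finite state type gives a rational series -/
lemma isRational_of_rep (a : List X → K) (u : σ → K) (μ : X → Matrix σ σ K) (v : σ → K)
    (h : ∀ w, a w = dotProduct u (Matrix.mulVec (wprod μ w) v)) : IsRational a := by
  set m := Fintype.card σ with hm
  set e := Fintype.equivFin σ with he
  refine ⟨m, u ∘ e.symm, fun x => (μ x).submatrix e.symm e.symm, v ∘ e.symm, ?_⟩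
  intro w
  rw [h w]
  rw [show wordProd (fun x => (μ x).submatrix e.symm e.symm) w
      = wprod (fun x => (μ x).submatrix e.symm e.symm) w from rfl]
  rw [pathSum, pathSum]
  apply Fintype.sum_equiv (Equiv.piCongrRight (fun _ => e))
  intro p
  simp only [Equiv.piCongrRight_apply, Pi.map_apply, Function.comp_apply,
    Equiv.symm_apply_apply]
  congr 1
  · congr 1
    unfold trW
    apply Finset.prod_congr rfl
    intro j _
    simp [Matrix.submatrix_apply]

end PathSum

/-! ### the language of accepted words -/

section Lang
variable {X K : Type*} [Semiring K] {n : ℕ}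
  (u : Fin n → K) (μ : X → Matrix (Fin n) (Fin n) K) (v : Fin n → K)

def accLang : Language X := {w | ∃ p, IsAcceptingPath u μ v w p}

def accDFA : DFA X (Set (Fin n)) where
  step T x := {t | ∃ s ∈ T, μ x s t ≠ 0}
  start := {s | u s ≠ 0}
  accept := {T | ∃ t ∈ T, v t ≠ 0}

lemma evalFrom_spec : ∀ (w : List X) (T : Set (Fin n)),
    (accDFA u μ v).evalFrom T w = {t | ∃ p : Fin (w.length + 1) → Fin n, p 0 ∈ T ∧
      (∀ i : Fin w.length, μ (w.get i) (p i.castSucc) (p i.succ) ≠ 0) ∧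
      p (Fin.last w.length) = t}
  | [], T => by
    show T = _
    ext t
    constructor
    · intro ht
      exact ⟨fun _ => t, ht, fun i => i.elim0, rfl⟩
    · rintro ⟨p, hp0, -, hpl⟩
      have h01 : Fin.last (([] : List X).length) = (0 : Fin (([] : List X).length + 1)) := rfl
      rw [h01] at hpl
      rwa [← hpl]
  | x :: w, T => by
    show (accDFA u μ v).evalFrom ((accDFA u μ v).step T x) w = _
    rw [evalFrom_spec w ((accDFA u μ v).step T x)]
    ext t
    constructor
    · rintro ⟨q, hq0, hqt, hql⟩
      obtain ⟨s, hs, hμ⟩ := hq0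
      refine ⟨Fin.cons s q, hs, ?_, ?_⟩
      · show ∀ i : Fin (w.length + 1), μ ((x :: w).get i)
          ((Fin.cons s q : Fin (w.length + 1 + 1) → Fin n) i.castSucc)
          ((Fin.cons s q : Fin (w.length + 1 + 1) → Fin n) i.succ) ≠ 0
        intro i
        induction i using Fin.cases with
        | zero =>
          simpa only [List.get_cons_zero, Fin.castSucc_zero, Fin.cons_zero,
            Fin.cons_succ] using hμ
        | succ j =>
          simpa only [List.get_cons_succ', ← Fin.succ_castSucc, Fin.cons_succ] using hqt j
      · show (Fin.cons s q : Fin (w.length + 1 + 1) → Fin n) (Fin.last (w.length + 1)) = t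
        rw [← Fin.succ_last, Fin.cons_succ]
        exact hql
    · rintro ⟨p, hp0, hpt, hpl⟩
      have hpt' : ∀ i : Fin (w.length + 1), μ ((x :: w).get i) (p i.castSucc) (p i.succ) ≠ 0 :=
        hpt
      have hpl' : p (Fin.last (w.length + 1)) = t := hpl
      refine ⟨fun j => p j.succ, ⟨p 0, hp0, ?_⟩, ?_, ?_⟩
      · simpa only [List.get_cons_zero, Fin.castSucc_zero] using hpt' 0
      · intro j
        simpa only [List.get_cons_succ', ← Fin.succ_castSucc] using hpt' j.succ
      · show p (Fin.last w.length).succ = t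
        rw [Fin.succ_last]
        exact hpl'

lemma accDFA_accepts : (accDFA u μ v).accepts = accLang u μ v := by
  ext w
  rw [DFA.mem_accepts]
  show (accDFA u μ v).evalFrom (accDFA u μ v).start w ∈ _ ↔ _
  rw [evalFrom_spec]
  constructor
  · rintro ⟨t, ⟨p, hp0, hpt, hpl⟩, hv⟩
    exact ⟨p, hp0, hpt, by rwa [hpl]⟩
  · rintro ⟨p, hp0, hpt, hpl⟩
    exact ⟨p (Fin.last w.length), ⟨p, hp0, hpt, rfl⟩, hpl⟩

lemma accLang_regular : RegularLang (accLang u μ v) :=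
  ⟨Set (Fin n), inferInstance, accDFA u μ v, accDFA_accepts u μ v⟩

end Lang

/-! ### 0/1 indicator representations over ℤ -/

section Ind
variable {X K : Type*} [Semiring K] {n : ℕ}
  (u : Fin n → K) (μ : X → Matrix (Fin n) (Fin n) K) (v : Fin n → K)

noncomputable def u01 : Fin n → ℤ := fun i => if u i ≠ 0 then 1 else 0
noncomputable def A01 : X → Matrix (Fin n) (Fin n) ℤ := fun x i j => if μ x i j ≠ 0 then 1 else 0
noncomputable def v01 : Fin n → ℤ := fun i => if v i ≠ 0 then 1 else 0

lemma trW_A01 (w : List X) (p : Fin (w.length + 1) → Fin n) :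
    trW (A01 μ) w p =
      if (∀ i : Fin w.length, μ (w.get i) (p i.castSucc) (p i.succ) ≠ 0) then 1 else 0 := by
  split
  case isTrue h =>
    unfold trW
    apply Finset.prod_eq_one
    intro i _
    simp only [A01, List.get_eq_getElem] at h ⊢
    simp [h i]
  case isFalse h =>
    push_neg at h
    obtain ⟨i, hi⟩ := h
    unfold trW
    apply Finset.prod_eq_zero (Finset.mem_univ i)
    simp only [A01, List.get_eq_getElem] at hi ⊢
    simp [hi]

lemma weight01 (w : List X) (p : Fin (w.length + 1) → Fin n) :
    u01 u (p 0) * trW (A01 μ) w p * v01 v (p (Fin.last w.length))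
      = if IsAcceptingPath u μ v w p then 1 else 0 := by
  rw [trW_A01]
  by_cases h1 : u (p 0) ≠ 0 <;>
    by_cases h2 : (∀ i : Fin w.length, μ (w.get i) (p i.castSucc) (p i.succ) ≠ 0) <;>
    by_cases h3 : v (p (Fin.last w.length)) ≠ 0 <;>
    simp [u01, v01, IsAcceptingPath, h1, h2, h3]

/-- summing a function against the accepting-path indicator, for an unambiguous rep -/
lemma sum_ifacc (hua : IsUnambiguous u μ v) (w : List X)
    (g : (Fin (w.length + 1) → Fin n) → ℤ) :
    ∑ p : Fin (w.length + 1) → Fin n, (if IsAcceptingPath u μ v w p then g p else 0)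
      = if h : ∃ p, IsAcceptingPath u μ v w p then g h.choose else 0 := by
  split
  case isTrue h =>
    rw [Finset.sum_eq_single h.choose]
    · rw [if_pos h.choose_spec]
    · intro p _ hne
      rw [if_neg]
      intro hacc
      exact hne (hua w p h.choose hacc h.choose_spec)
    · intro habs
      exact absurd (Finset.mem_univ _) habs
  case isFalse h =>
    apply Finset.sum_eq_zero
    intro p _
    rw [if_neg]
    exact fun hacc => h ⟨p, hacc⟩

end Ind

/-! ### the three kinds of exponent series -/

section Series
variable {X K : Type*} [Semiring K] {n : ℕ}
  (u : Fin n → K) (μ : X → Matrix (Fin n) (Fin n) K) (v : Fin n → K)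

/-- counts marked occurrences of the transition `(x₀, s, t)` along `p` -/
noncomputable def cntM (x₀ : X) (s t : Fin n) (w : List X) (p : Fin (w.length + 1) → Fin n) : ℤ :=
  ∑ j : Fin w.length,
    if (w.get j = x₀ ∧ p j.castSucc = s ∧ p j.succ = t) then 1 else 0

lemma cntM_nil (x₀ : X) (s t : Fin n) (p : Fin 1 → Fin n) : cntM x₀ s t [] p = 0 := by
  simp [cntM]

lemma cntM_cons (x₀ : X) (s t : Fin n) (x : X) (w : List X) (i : Fin n)
    (q : Fin (w.length + 1) → Fin n) :
    cntM x₀ s t (x :: w) (Fin.cons i q)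
      = (if (x = x₀ ∧ i = s ∧ q 0 = t) then 1 else 0) + cntM x₀ s t w q := by
  have h : cntM x₀ s t (x :: w) (Fin.cons i q)
      = ∑ j : Fin (w.length + 1),
          (if ((x :: w).get j = x₀ ∧ (Fin.cons i q : Fin (w.length + 1 + 1) → Fin n) j.castSucc = s
              ∧ (Fin.cons i q : Fin (w.length + 1 + 1) → Fin n) j.succ = t) then (1 : ℤ) else 0) :=
    rfl
  rw [h, Fin.sum_univ_succ]
  congr 1

lemma cntM_nonneg (x₀ : X) (s t : Fin n) (w : List X) (p : Fin (w.length + 1) → Fin n) :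
    0 ≤ cntM x₀ s t w p := by
  apply Finset.sum_nonneg
  intro j _
  split <;> norm_num

lemma cntM_le (x₀ : X) (s t : Fin n) (w : List X) (p : Fin (w.length + 1) → Fin n) :
    cntM x₀ s t w p ≤ (w.length : ℤ) := by
  calc cntM x₀ s t w p ≤ ∑ _j : Fin w.length, (1 : ℤ) := by
        apply Finset.sum_le_sum
        intro j _
        split <;> norm_num
    _ = (w.length : ℤ) := by simp

lemma cntM_pos_ne (x₀ : X) (s t : Fin n) (w : List X) (p : Fin (w.length + 1) → Fin n)
    (hacc : IsAcceptingPath u μ v w p) (hc : cntM x₀ s t w p ≠ 0) : μ x₀ s t ≠ 0 := by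
  have : ∃ j : Fin w.length, (w.get j = x₀ ∧ p j.castSucc = s ∧ p j.succ = t) := by
    by_contra hno
    push_neg at hno
    apply hc
    apply Finset.sum_eq_zero
    intro j _
    rw [if_neg]
    intro ⟨ha, hb, hcc⟩
    exact hno j ha hb hcc
  obtain ⟨j, ha, hb, hcc⟩ := this
  rw [← ha, ← hb, ← hcc]
  exact hacc.2.1 j

/-- number of occurrences as a natural-number cardinality -/
lemma cntM_eq_card (x₀ : X) (s t : Fin n) (w : List X) (p : Fin (w.length + 1) → Fin n) :
    cntM x₀ s t w p = ((Finset.univ.filter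
      (fun j : Fin w.length => (w.get j = x₀ ∧ p j.castSucc = s ∧ p j.succ = t))).card : ℤ) := by
  rw [Finset.card_filter]
  push_cast
  rfl

/-- the three exponent series -/
noncomputable def aStart (s : Fin n) (w : List X) : ℤ :=
  if h : ∃ p, IsAcceptingPath u μ v w p then (if h.choose 0 = s then 1 else 0) else 0

noncomputable def aEnd (t : Fin n) (w : List X) : ℤ :=
  if h : ∃ p, IsAcceptingPath u μ v w p
    then (if h.choose (Fin.last w.length) = t then 1 else 0) else 0

noncomputable def aTrans (x₀ : X) (s t : Fin n) (w : List X) : ℤ :=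
  if h : ∃ p, IsAcceptingPath u μ v w p then cntM x₀ s t w h.choose else 0

end Series

/-! ### representations of the exponent series -/

section Reps
variable {X K : Type*} [Semiring K] {n : ℕ}
  (u : Fin n → K) (μ : X → Matrix (Fin n) (Fin n) K) (v : Fin n → K)

lemma aStart_rep (hua : IsUnambiguous u μ v) (s : Fin n) (w : List X) :
    aStart u μ v s w = dotProduct (fun i => if i = s then u01 u i else 0)
      (Matrix.mulVec (wprod (A01 μ) w) (v01 v)) := by
  have hstep : ∀ p : Fin (w.length + 1) → Fin n,
      (fun i => if i = s then u01 u i else 0) (p 0) * trW (A01 μ) w p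
          * v01 v (p (Fin.last w.length))
        = (if IsAcceptingPath u μ v w p then (if p 0 = s then (1 : ℤ) else 0) else 0) := by
    intro p
    by_cases hps : p 0 = s
    · have h1 : (fun i => if i = s then u01 u i else 0) (p 0) = u01 u (p 0) := by simp [hps]
      rw [h1, weight01]
      split <;> simp [hps]
    · have h1 : (fun i => if i = s then u01 u i else 0) (p 0) = 0 := by simp [hps]
      rw [h1]
      split <;> simp [hps]
  rw [pathSum, Finset.sum_congr rfl (fun p _ => hstep p), sum_ifacc u μ v hua w]
  rfl

lemma aEnd_rep (hua : IsUnambiguous u μ v) (t : Fin n) (w : List X) :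
    aEnd u μ v t w = dotProduct (u01 u)
      (Matrix.mulVec (wprod (A01 μ) w) (fun i => if i = t then v01 v i else 0)) := by
  have hstep : ∀ p : Fin (w.length + 1) → Fin n,
      u01 u (p 0) * trW (A01 μ) w p
          * (fun i => if i = t then v01 v i else 0) (p (Fin.last w.length))
        = (if IsAcceptingPath u μ v w p
            then (if p (Fin.last w.length) = t then (1 : ℤ) else 0) else 0) := by
    intro p
    by_cases hps : p (Fin.last w.length) = t
    · have h1 : (fun i => if i = t then v01 v i else 0) (p (Fin.last w.length))
          = v01 v (p (Fin.last w.length)) := by simp [hps]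
      rw [h1, weight01]
      split <;> simp [hps]
    · have h1 : (fun i => if i = t then v01 v i else 0) (p (Fin.last w.length)) = 0 := by
        simp [hps]
      rw [h1]
      split <;> simp [hps]
  rw [pathSum, Finset.sum_congr rfl (fun p _ => hstep p), sum_ifacc u μ v hua w]
  rfl

/-- marked transition matrix -/
noncomputable def Dmk (x₀ : X) (s t : Fin n) : X → Matrix (Fin n) (Fin n) ℤ := fun x i j =>
  (if (x = x₀ ∧ i = s ∧ j = t) then 1 else 0) * A01 μ x i j

/-- block matrices of the counting representation -/
noncomputable def Bmk (x₀ : X) (s t : Fin n) : X → Matrix (Fin n ⊕ Fin n) (Fin n ⊕ Fin n) ℤ :=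
  fun x => Matrix.fromBlocks (A01 μ x) (Dmk μ x₀ s t x) 0 (A01 μ x)

lemma CL (x₀ : X) (s t : Fin n) : ∀ (w : List X) (f g : Fin n → ℤ),
    dotProduct (Sum.elim f g)
      (Matrix.mulVec (wprod (Bmk μ x₀ s t) w) (Sum.elim 0 (v01 v)))
    = (∑ p : Fin (w.length + 1) → Fin n,
        f (p 0) * trW (A01 μ) w p * v01 v (p (Fin.last w.length)) * cntM x₀ s t w p)
      + dotProduct g (Matrix.mulVec (wprod (A01 μ) w) (v01 v))
  | [], f, g => by
    rw [wprod_nil, wprod_nil, Matrix.one_mulVec, Matrix.one_mulVec]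
    simp [dotProduct, Fintype.sum_sum_type, cntM_nil]
  | x :: w, f, g => by
    rw [wprod_cons, ← Matrix.mulVec_mulVec, Matrix.dotProduct_mulVec]
    have hsplit : (Sum.elim f g ᵥ* Bmk μ x₀ s t x)
        = Sum.elim (f ᵥ* A01 μ x) (f ᵥ* Dmk μ x₀ s t x + g ᵥ* A01 μ x) := by
      rw [Bmk, Matrix.vecMul_fromBlocks]
      simp
    rw [hsplit, CL x₀ s t w (f ᵥ* A01 μ x) (f ᵥ* Dmk μ x₀ s t x + g ᵥ* A01 μ x)]
    rw [add_dotProduct,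
      ← Matrix.dotProduct_mulVec g (A01 μ x) (Matrix.mulVec (wprod (A01 μ) w) (v01 v)),
      ← Matrix.dotProduct_mulVec f (Dmk μ x₀ s t x) (Matrix.mulVec (wprod (A01 μ) w) (v01 v)),
      Matrix.mulVec_mulVec, Matrix.mulVec_mulVec, ← wprod_cons]
    have hDexp : dotProduct f
        (Matrix.mulVec (Dmk μ x₀ s t x * wprod (A01 μ) w) (v01 v))
        = ∑ q : Fin (w.length + 1) → Fin n,
            (f ᵥ* Dmk μ x₀ s t x) (q 0) * trW (A01 μ) w q
              * v01 v (q (Fin.last w.length)) := by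
      rw [← Matrix.mulVec_mulVec, Matrix.dotProduct_mulVec f, pathSum]
    rw [hDexp]
    rw [show ∀ (A B C : ℤ), A + (B + C) = (A + B) + C from fun A B C => by ring]
    congr 1
    rw [← Finset.sum_add_distrib]
    refine Eq.trans ?_ (sum_paths_succ w.length
      (fun P => f (P 0) * trW (A01 μ) (x :: w) P * v01 v (P (Fin.last (x :: w).length))
        * cntM x₀ s t (x :: w) P)).symm
    rw [Finset.sum_comm]
    apply Finset.sum_congr rfl
    intro q _
    have h2 : ∀ i : Fin n, (Fin.cons i q : Fin (w.length + 1 + 1) → Fin n)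
        (Fin.last (x :: w).length) = q (Fin.last w.length) := by
      intro i
      show (Fin.cons i q : Fin (w.length + 1 + 1) → Fin n) (Fin.last (w.length + 1)) = _
      rw [← Fin.succ_last, Fin.cons_succ]
    have key : ∀ i : Fin n,
        f ((Fin.cons i q : Fin (w.length + 1 + 1) → Fin n) 0)
          * trW (A01 μ) (x :: w) (Fin.cons i q)
          * v01 v ((Fin.cons i q : Fin (w.length + 1 + 1) → Fin n) (Fin.last (x :: w).length))
          * cntM x₀ s t (x :: w) (Fin.cons i q)
        = f i * A01 μ x i (q 0) * trW (A01 μ) w q * v01 v (q (Fin.last w.length))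
            * cntM x₀ s t w q
          + f i * Dmk μ x₀ s t x i (q 0) * trW (A01 μ) w q
            * v01 v (q (Fin.last w.length)) := by
      intro i
      rw [trW_cons, cntM_cons, h2 i,
        show (Fin.cons i q : Fin (w.length + 1 + 1) → Fin n) 0 = i from rfl]
      have hD : Dmk μ x₀ s t x i (q 0)
          = (if (x = x₀ ∧ i = s ∧ q 0 = t) then (1 : ℤ) else 0) * A01 μ x i (q 0) := rfl
      rw [hD]
      ring
    rw [Finset.sum_congr rfl (fun i _ => key i), Finset.sum_add_distrib]
    congr 1
    · rw [show (f ᵥ* A01 μ x) (q 0) = ∑ i, f i * A01 μ x i (q 0) from rfl,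
        Finset.sum_mul, Finset.sum_mul, Finset.sum_mul]
    · rw [show (f ᵥ* Dmk μ x₀ s t x) (q 0) = ∑ i, f i * Dmk μ x₀ s t x i (q 0) from rfl,
        Finset.sum_mul, Finset.sum_mul]

lemma aTrans_rep (hua : IsUnambiguous u μ v) (x₀ : X) (s t : Fin n) (w : List X) :
    aTrans u μ v x₀ s t w = dotProduct (Sum.elim (u01 u) 0)
      (Matrix.mulVec (wprod (Bmk μ x₀ s t) w) (Sum.elim 0 (v01 v))) := by
  rw [CL μ v x₀ s t w (u01 u) 0, zero_dotProduct, add_zero]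
  have hstep : ∀ p : Fin (w.length + 1) → Fin n,
      u01 u (p 0) * trW (A01 μ) w p * v01 v (p (Fin.last w.length)) * cntM x₀ s t w p
        = (if IsAcceptingPath u μ v w p then cntM x₀ s t w p else 0) := by
    intro p
    rw [weight01, ite_mul, one_mul, zero_mul]
  rw [Finset.sum_congr rfl (fun p _ => hstep p), sum_ifacc u μ v hua w]
  rfl
end Reps

/-! ### evaluation of `S` -/

section SEval
variable {X R : Type*} [CommSemiring R] {n : ℕ}
  (S : List X → R) (u : Fin n → R) (μ : X → Matrix (Fin n) (Fin n) R) (v : Fin n → R)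

lemma pweight_zero (w : List X) (p : Fin (w.length + 1) → Fin n)
    (hp : ¬ IsAcceptingPath u μ v w p) :
    u (p 0) * trW μ w p * v (p (Fin.last w.length)) = 0 := by
  by_cases h1 : u (p 0) = 0
  · rw [h1, zero_mul, zero_mul]
  by_cases h3 : v (p (Fin.last w.length)) = 0
  · rw [h3, mul_zero]
  have h2 : ¬ ∀ i : Fin w.length, μ (w.get i) (p i.castSucc) (p i.succ) ≠ 0 :=
    fun hall => hp ⟨h1, hall, h3⟩
  push_neg at h2
  obtain ⟨i, hi⟩ := h2
  unfold trW
  rw [Finset.prod_eq_zero (Finset.mem_univ i) hi, mul_zero, zero_mul]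

lemma S_eval (hlin : IsLinRep S u μ v) (w : List X) :
    S w = ∑ p : Fin (w.length + 1) → Fin n,
      u (p 0) * trW μ w p * v (p (Fin.last w.length)) := by
  rw [hlin w]
  exact pathSum μ v w u

lemma S_off (hlin : IsLinRep S u μ v) (w : List X)
    (hw : ¬ ∃ p, IsAcceptingPath u μ v w p) : S w = 0 := by
  rw [S_eval S u μ v hlin w]
  apply Finset.sum_eq_zero
  intro p _
  exact pweight_zero u μ v w p (fun h => hw ⟨p, h⟩)

lemma S_on (hlin : IsLinRep S u μ v) (hua : IsUnambiguous u μ v) (w : List X)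
    (h : ∃ p, IsAcceptingPath u μ v w p) :
    S w = u (h.choose 0) * trW μ w h.choose * v (h.choose (Fin.last w.length)) := by
  rw [S_eval S u μ v hlin w, Finset.sum_eq_single h.choose]
  · intro p _ hne
    apply pweight_zero
    intro hacc
    exact hne (hua w p h.choose hacc h.choose_spec)
  · intro habs
    exact absurd (Finset.mem_univ _) habs

end SEval

/-! ### the product over all transition counts -/

lemma prod_zpow_cnt {X K : Type*} [Field K] [Fintype X] {n : ℕ}
    (G : X × Fin n × Fin n → K) (w : List X) (p : Fin (w.length + 1) → Fin n) :
    ∏ τ : X × Fin n × Fin n, G τ ^ (cntM τ.1 τ.2.1 τ.2.2 w p)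
      = ∏ j : Fin w.length, G (w.get j, p j.castSucc, p j.succ) := by
  have h1 : ∀ τ : X × Fin n × Fin n, G τ ^ (cntM τ.1 τ.2.1 τ.2.2 w p)
      = G τ ^ ((Finset.univ.filter
          (fun j : Fin w.length => (w.get j, p j.castSucc, p j.succ) = τ)).card) := by
    intro τ
    rw [cntM_eq_card, zpow_natCast]
    congr 2
    apply Finset.filter_congr
    intro j _
    constructor
    · rintro ⟨ha, hb, hc⟩
      rw [Prod.ext_iff, Prod.ext_iff]
      exact ⟨ha, hb, hc⟩
    · intro h
      rw [← h]
      exact ⟨rfl, rfl, rfl⟩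
  rw [Finset.prod_congr rfl (fun τ _ => h1 τ)]
  rw [← Finset.prod_fiberwise_of_maps_to
    (g := fun j : Fin w.length => (w.get j, p j.castSucc, p j.succ))
    (t := (Finset.univ : Finset (X × Fin n × Fin n)))
    (fun j _ => Finset.mem_univ _)
    (fun j => G (w.get j, p j.castSucc, p j.succ))]
  apply Finset.prod_congr rfl
  intro τ _
  rw [Finset.prod_congr rfl (fun j hj => by
    rw [(Finset.mem_filter.mp hj).2]), Finset.prod_const]

/-! ### the lambda values and exponent series, indexed by one sum type -/

noncomputable def lam0 {X K : Type*} [Semiring K] {n : ℕ}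
    (u : Fin n → K) (μ : X → Matrix (Fin n) (Fin n) K) (v : Fin n → K) :
    (Fin n ⊕ ((X × Fin n × Fin n) ⊕ Fin n)) → K :=
  Sum.elim (fun s => if u s ≠ 0 then u s else 1)
    (Sum.elim (fun τ : X × Fin n × Fin n =>
        if μ τ.1 τ.2.1 τ.2.2 ≠ 0 then μ τ.1 τ.2.1 τ.2.2 else 1)
      (fun t => if v t ≠ 0 then v t else 1))

noncomputable def a0 {X K : Type*} [Semiring K] {n : ℕ}
    (u : Fin n → K) (μ : X → Matrix (Fin n) (Fin n) K) (v : Fin n → K) :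
    (Fin n ⊕ ((X × Fin n × Fin n) ⊕ Fin n)) → List X → ℤ :=
  Sum.elim (fun s => aStart u μ v s)
    (Sum.elim (fun τ : X × Fin n × Fin n => aTrans u μ v τ.1 τ.2.1 τ.2.2)
      (fun t => aEnd u μ v t))

/-- A series over a domain `R` with an unambiguous linear representation over `R` has its
coefficients of the form `λ₁^{a₁(w)} ⋯ λ_k^{a_k(w)}` on a regular language `L` (and `0`
off `L`), for linearly bounded rational integer series `aᵢ` supported on `L`. -/
theorem unambiguous_formula {R K X : Type*} [CommRing R] [IsDomain R] [Field K]
    [Algebra R K] [IsFractionRing R K] [Fintype X] [Nonempty X]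
    (S : List X → R)
    (hrep : ∃ (n : ℕ) (u : Fin n → R) (μ : X → Matrix (Fin n) (Fin n) R) (v : Fin n → R),
      IsLinRep S u μ v ∧ IsUnambiguous u μ v) :
    ∃ (k : ℕ) (lam : Fin k → R) (a : Fin k → (List X → ℤ)) (L : Language X),
      (∀ i, lam i ≠ 0) ∧
      (∀ i, IsRational (a i)) ∧
      (∀ i, LinearlyBounded (a i)) ∧
      RegularLang L ∧
      (∀ (i : Fin k) (w : List X), a i w ≠ 0 → w ∈ L) ∧
      (∀ w ∈ L, algebraMap R K (S w) = ∏ i, (algebraMap R K (lam i)) ^ (a i w)) ∧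
      (∀ w : List X, w ∉ L → S w = 0) := by
  obtain ⟨n, u, μ, v, hlin, hua⟩ := hrep
  set e := (Fintype.equivFin (Fin n ⊕ ((X × Fin n × Fin n) ⊕ Fin n))).symm with he
  refine ⟨Fintype.card (Fin n ⊕ ((X × Fin n × Fin n) ⊕ Fin n)),
    fun i => lam0 u μ v (e i), fun i => a0 u μ v (e i), accLang u μ v,
    ?_, ?_, ?_, accLang_regular u μ v, ?_, ?_, ?_⟩
  · -- nonzero
    intro i
    show lam0 u μ v (e i) ≠ 0
    rcases hei : e i with s | τ | t
    · show (if u s ≠ 0 then u s else 1) ≠ 0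
      split_ifs with h
      exacts [h, one_ne_zero]
    · show (if μ τ.1 τ.2.1 τ.2.2 ≠ 0 then μ τ.1 τ.2.1 τ.2.2 else 1) ≠ 0
      split_ifs with h
      exacts [h, one_ne_zero]
    · show (if v t ≠ 0 then v t else 1) ≠ 0
      split_ifs with h
      exacts [h, one_ne_zero]
  · -- rational
    intro i
    show IsRational (a0 u μ v (e i))
    rcases hei : e i with s | τ | t
    · exact isRational_of_rep _ _ _ _ (fun w => aStart_rep u μ v hua s w)
    · exact isRational_of_rep _ _ _ _ (fun w => aTrans_rep u μ v hua τ.1 τ.2.1 τ.2.2 w)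
    · exact isRational_of_rep _ _ _ _ (fun w => aEnd_rep u μ v hua t w)
  · -- linearly bounded
    intro i
    refine ⟨1, ?_⟩
    intro w hwne
    have h1 : 1 ≤ w.length := List.length_pos_iff.mpr hwne
    have h1' : (1 : ℤ) ≤ (w.length : ℤ) := by exact_mod_cast h1
    rw [Nat.cast_one, one_mul]
    show |a0 u μ v (e i) w| ≤ (w.length : ℤ)
    rcases hei : e i with s | τ | t
    · refine le_trans ?_ h1'
      show |aStart u μ v s w| ≤ 1
      rw [aStart]
      split_ifs <;> simp
    · show |aTrans u μ v τ.1 τ.2.1 τ.2.2 w| ≤ (w.length : ℤ)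
      rw [aTrans]
      split
      case isTrue h =>
        rw [abs_of_nonneg (cntM_nonneg τ.1 τ.2.1 τ.2.2 w h.choose)]
        exact cntM_le τ.1 τ.2.1 τ.2.2 w h.choose
      case isFalse h =>
        simp
    · refine le_trans ?_ h1'
      show |aEnd u μ v t w| ≤ 1
      rw [aEnd]
      split_ifs <;> simp
  · -- support
    intro i w hne
    have hne' : a0 u μ v (e i) w ≠ 0 := hne
    by_contra hcon
    apply hne'
    have hcon' : ¬ ∃ p, IsAcceptingPath u μ v w p := hcon
    rcases hei : e i with s | τ | t
    · show aStart u μ v s w = 0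
      rw [aStart, dif_neg hcon']
    · show aTrans u μ v τ.1 τ.2.1 τ.2.2 w = 0
      rw [aTrans, dif_neg hcon']
    · show aEnd u μ v t w = 0
      rw [aEnd, dif_neg hcon']
  · -- formula on L
    intro w hw
    have hw' : ∃ p, IsAcceptingPath u μ v w p := hw
    have hacc := hw'.choose_spec
    have hR : (∏ i, (algebraMap R K) (lam0 u μ v (e i)) ^ (a0 u μ v (e i) w))
        = (algebraMap R K) (u (hw'.choose 0))
          * ((algebraMap R K) (trW μ w hw'.choose)
            * (algebraMap R K) (v (hw'.choose (Fin.last w.length)))) := by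
      rw [Equiv.prod_comp e
        (fun τ => (algebraMap R K) (lam0 u μ v τ) ^ (a0 u μ v τ w))]
      rw [Fintype.prod_sum_type, Fintype.prod_sum_type]
      congr 1
      · -- start block
        have ha : ∀ s : Fin n, a0 u μ v (Sum.inl s) w
            = (if hw'.choose 0 = s then (1 : ℤ) else 0) := by
          intro s
          show aStart u μ v s w = _
          rw [aStart, dif_pos hw']
        rw [Finset.prod_congr rfl (fun s _ => by rw [ha s])]
        rw [Finset.prod_eq_single (hw'.choose 0)]
        · rw [if_pos rfl, zpow_one]
          show (algebraMap R K) (if u (hw'.choose 0) ≠ 0 then u (hw'.choose 0) else 1) = _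
          rw [if_pos hacc.1]
        · intro s _ hs
          rw [if_neg (fun hh => hs hh.symm), zpow_zero]
        · intro habs
          exact absurd (Finset.mem_univ _) habs
      congr 1
      · -- transition block
        have ha : ∀ τ : X × Fin n × Fin n, a0 u μ v (Sum.inr (Sum.inl τ)) w
            = cntM τ.1 τ.2.1 τ.2.2 w hw'.choose := by
          intro τ
          show aTrans u μ v τ.1 τ.2.1 τ.2.2 w = _
          rw [aTrans, dif_pos hw']
        rw [Finset.prod_congr rfl (fun τ _ => by rw [ha τ])]
        have hb : ∀ τ : X × Fin n × Fin n,
            (algebraMap R K) (lam0 u μ v (Sum.inr (Sum.inl τ)))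
                ^ (cntM τ.1 τ.2.1 τ.2.2 w hw'.choose)
              = (algebraMap R K) (μ τ.1 τ.2.1 τ.2.2)
                ^ (cntM τ.1 τ.2.1 τ.2.2 w hw'.choose) := by
          intro τ
          by_cases hc : cntM τ.1 τ.2.1 τ.2.2 w hw'.choose = 0
          · rw [hc, zpow_zero, zpow_zero]
          · congr 1
            show (algebraMap R K) (if μ τ.1 τ.2.1 τ.2.2 ≠ 0 then μ τ.1 τ.2.1 τ.2.2 else 1) = _
            rw [if_pos (cntM_pos_ne u μ v τ.1 τ.2.1 τ.2.2 w hw'.choose hacc hc)]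
        rw [Finset.prod_congr rfl (fun τ _ => hb τ)]
        rw [prod_zpow_cnt (fun τ => (algebraMap R K) (μ τ.1 τ.2.1 τ.2.2)) w hw'.choose]
        rw [show trW μ w hw'.choose = ∏ j : Fin w.length,
          μ (w.get j) (hw'.choose j.castSucc) (hw'.choose j.succ) from rfl]
        rw [map_prod]
      · -- end block
        have ha : ∀ t : Fin n, a0 u μ v (Sum.inr (Sum.inr t)) w
            = (if hw'.choose (Fin.last w.length) = t then (1 : ℤ) else 0) := by
          intro t
          show aEnd u μ v t w = _
          rw [aEnd, dif_pos hw']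
        rw [Finset.prod_congr rfl (fun t _ => by rw [ha t])]
        rw [Finset.prod_eq_single (hw'.choose (Fin.last w.length))]
        · rw [if_pos rfl, zpow_one]
          show (algebraMap R K) (if v (hw'.choose (Fin.last w.length)) ≠ 0
            then v (hw'.choose (Fin.last w.length)) else 1) = _
          rw [if_pos hacc.2.2]
        · intro t _ ht
          rw [if_neg (fun hh => ht hh.symm), zpow_zero]
        · intro habs
          exact absurd (Finset.mem_univ _) habs
    show algebraMap R K (S w)
        = ∏ i, (algebraMap R K) (lam0 u μ v (e i)) ^ (a0 u μ v (e i) w)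
    rw [hR, S_on S u μ v hlin hua w hw', _root_.map_mul, _root_.map_mul, mul_assoc]
  · -- off L
    intro w hwn
    exact S_off S u μ v hlin w hwn
end

section
/- Let K be a field, X a finite nonempty alphabet, and S : X* → K a rational series. Then the following are equivalent: (1) S admits a deterministic linear representation; (2) for every minimal linear representation (u, μ, v) of S, the set Ω = { u·μ(w) : w ∈ X* } ⊆ K^{1×n} is contained in a finite union of vector subspaces of dimension at most 1. -/
open Matrix

namespace DetAux

variable {X K : Type*} [Field K]

lemma wordProd_nil {n : ℕ} (μ : X → Matrix (Fin n) (Fin n) K) : wordProd μ [] = 1 := rfl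

lemma wordProd_append {n : ℕ} (μ : X → Matrix (Fin n) (Fin n) K) (w w' : List X) :
    wordProd μ (w ++ w') = wordProd μ w * wordProd μ w' := by
  simp [wordProd, List.prod_append]

lemma wordProd_concat {n : ℕ} (μ : X → Matrix (Fin n) (Fin n) K) (w : List X) (x : X) :
    wordProd μ (w ++ [x]) = wordProd μ w * μ x := by
  simp [wordProd_append, wordProd]

lemma wordProd_transpose {n : ℕ} (μ : X → Matrix (Fin n) (Fin n) K) (w : List X) :
    wordProd (fun x => (μ x)ᵀ) w = (wordProd μ w.reverse)ᵀ := by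
  induction w with
  | nil => simp [wordProd_nil]
  | cons a t ih =>
      have : wordProd (fun x => (μ x)ᵀ) (a :: t) = (μ a)ᵀ * wordProd (fun x => (μ x)ᵀ) t := by
        simp [wordProd]
      rw [this, ih, List.reverse_cons, wordProd_concat, Matrix.transpose_mul]

/-- `S w = (u ᵥ* wordProd μ w) ⬝ᵥ v`. -/
lemma linrep_eq {n : ℕ} {S : List X → K} {u : Fin n → K} {μ : X → Matrix (Fin n) (Fin n) K}
    {v : Fin n → K} (h : IsLinRep S u μ v) (w : List X) :
    S w = (u ᵥ* wordProd μ w) ⬝ᵥ v := by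
  rw [h w, Matrix.dotProduct_mulVec]

lemma split_eq {n : ℕ} {S : List X → K} {u : Fin n → K} {μ : X → Matrix (Fin n) (Fin n) K}
    {v : Fin n → K} (h : IsLinRep S u μ v) (w w' : List X) :
    S (w ++ w') = (u ᵥ* wordProd μ w) ⬝ᵥ (wordProd μ w' *ᵥ v) := by
  rw [h (w ++ w'), wordProd_append, Matrix.dotProduct_mulVec, ← Matrix.vecMul_vecMul,
    ← Matrix.dotProduct_mulVec]

/-- transpose representation recognizes the reversed series -/
lemma transpose_rep {n : ℕ} {S : List X → K} {u : Fin n → K} {μ : X → Matrix (Fin n) (Fin n) K}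
    {v : Fin n → K} (h : IsLinRep S u μ v) :
    IsLinRep (fun w => S w.reverse) v (fun x => (μ x)ᵀ) u := by
  intro w
  show S w.reverse = _
  rw [h w.reverse]
  rw [show wordProd (fun x => (μ x)ᵀ) w = (wordProd μ w.reverse)ᵀ from wordProd_transpose μ w]
  rw [Matrix.mulVec_transpose, Matrix.dotProduct_mulVec]
  exact dotProduct_comm _ _


/-- membership of reachability vectors in the span -/
lemma mem_reach_span {n : ℕ} (u : Fin n → K) (μ : X → Matrix (Fin n) (Fin n) K) (w : List X) :
    u ᵥ* wordProd μ w ∈ Submodule.span K (Set.range fun w : List X => u ᵥ* wordProd μ w) :=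
  Submodule.subset_span ⟨w, rfl⟩

/-- If the reachability span is not everything, there is a smaller representation. -/
lemma span_reach_eq_top {n : ℕ} {S : List X → K} {u : Fin n → K}
    {μ : X → Matrix (Fin n) (Fin n) K} {v : Fin n → K} (h : IsLinRep S u μ v)
    (hmin : ∀ (m : ℕ) (u' : Fin m → K) (μ' : X → Matrix (Fin m) (Fin m) K) (v' : Fin m → K),
      IsLinRep S u' μ' v' → n ≤ m) :
    Submodule.span K (Set.range fun w : List X => u ᵥ* wordProd μ w) = ⊤ := by
  classical
  set R : Submodule K (Fin n → K) :=
    Submodule.span K (Set.range fun w : List X => u ᵥ* wordProd μ w) with hR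
  have hmem : ∀ w : List X, u ᵥ* wordProd μ w ∈ R := fun w => mem_reach_span u μ w
  have hu : u ∈ R := by
    have := hmem []
    rwa [wordProd_nil, Matrix.vecMul_one] at this
  have hinv : ∀ (x : X), ∀ z ∈ R, (μ x).vecMulLinear z ∈ R := by
    intro x z hz
    induction hz using Submodule.span_induction with
    | mem z hz =>
        obtain ⟨w, rfl⟩ := hz
        have : (μ x).vecMulLinear (u ᵥ* wordProd μ w) = u ᵥ* wordProd μ (w ++ [x]) := by
          rw [Matrix.vecMulLinear_apply, wordProd_concat, ← Matrix.vecMul_vecMul]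
        rw [this]; exact hmem _
    | zero => simp
    | add a b _ _ ha hb => rw [map_add]; exact R.add_mem ha hb
    | smul c a _ ha => rw [_root_.map_smul]; exact R.smul_mem c ha
  -- restriction of right multiplication to R
  let T : X → (R →ₗ[K] R) := fun x => ((μ x).vecMulLinear).restrict (hinv x)
  let b : Module.Basis (Fin (Module.finrank K R)) K R := Module.finBasis K R
  let μ'' : X → Matrix (Fin (Module.finrank K R)) (Fin (Module.finrank K R)) K :=
    fun x => (LinearMap.toMatrix b b (T x))ᵀ
  let u'' : Fin (Module.finrank K R) → K := ⇑(b.repr ⟨u, hu⟩)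
  let v'' : Fin (Module.finrank K R) → K := fun i => (b i : Fin n → K) ⬝ᵥ v
  have key : ∀ w : List X, u'' ᵥ* wordProd μ'' w = ⇑(b.repr ⟨u ᵥ* wordProd μ w, hmem w⟩) := by
    intro w
    induction w using List.reverseRecOn with
    | nil =>
        have he : (⟨u ᵥ* wordProd μ [], hmem []⟩ : R) = ⟨u, hu⟩ :=
          Subtype.ext (by show u ᵥ* wordProd μ [] = u; rw [wordProd_nil, Matrix.vecMul_one])
        rw [wordProd_nil, Matrix.vecMul_one, he]
    | append_singleton w x ih =>
        have hTx : T x ⟨u ᵥ* wordProd μ w, hmem w⟩ = ⟨u ᵥ* wordProd μ (w ++ [x]), hmem _⟩ := by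
          apply Subtype.ext
          show ((μ x).vecMulLinear) (u ᵥ* wordProd μ w) = u ᵥ* wordProd μ (w ++ [x])
          rw [Matrix.vecMulLinear_apply, wordProd_concat, ← Matrix.vecMul_vecMul]
        rw [wordProd_concat, ← Matrix.vecMul_vecMul, ih]
        show ⇑(b.repr _) ᵥ* (LinearMap.toMatrix b b (T x))ᵀ = _
        rw [Matrix.vecMul_transpose, LinearMap.toMatrix_mulVec_repr, hTx]
  have coord : ∀ r : R, (r : Fin n → K) ⬝ᵥ v = ⇑(b.repr r) ⬝ᵥ v'' := by
    intro r
    have hs := b.sum_repr r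
    calc (r : Fin n → K) ⬝ᵥ v
        = (((∑ i, b.repr r i • b i) : R) : Fin n → K) ⬝ᵥ v := by rw [hs]
      _ = (∑ i, b.repr r i • ((b i : R) : Fin n → K)) ⬝ᵥ v := by
          norm_cast
      _ = ∑ i, b.repr r i * (((b i : R) : Fin n → K) ⬝ᵥ v) := by
          simp only [dotProduct, Finset.sum_apply, Pi.smul_apply, smul_eq_mul,
            Finset.sum_mul, Finset.mul_sum, mul_assoc]
          rw [Finset.sum_comm]
      _ = ⇑(b.repr r) ⬝ᵥ v'' := by simp [dotProduct, v'']
  have hrep'' : IsLinRep S u'' μ'' v'' := by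
    intro w
    rw [Matrix.dotProduct_mulVec, key w, linrep_eq h]
    exact coord ⟨u ᵥ* wordProd μ w, hmem w⟩
  have hle : n ≤ Module.finrank K R := hmin _ u'' μ'' v'' hrep''
  have hfin : Module.finrank K R = Module.finrank K (Fin n → K) := by
    have h1 : Module.finrank K R ≤ Module.finrank K (Fin n → K) := R.finrank_le
    rw [Module.finrank_fin_fun] at h1 ⊢
    omega
  exact Submodule.eq_top_of_finrank_eq hfin

/-- Observability: for a minimal representation, a vector orthogonal to all
`wordProd μ w *ᵥ v` is zero. -/
lemma observability {n : ℕ} {S : List X → K} {u : Fin n → K}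
    {μ : X → Matrix (Fin n) (Fin n) K} {v : Fin n → K} (h : IsLinRep S u μ v)
    (hmin : ∀ (m : ℕ) (u' : Fin m → K) (μ' : X → Matrix (Fin m) (Fin m) K) (v' : Fin m → K),
      IsLinRep S u' μ' v' → n ≤ m)
    {z : Fin n → K} (hz : ∀ w : List X, z ⬝ᵥ (wordProd μ w *ᵥ v) = 0) : z = 0 := by
  classical
  -- transpose representation of the reversed series
  have htr : IsLinRep (fun w => S w.reverse) v (fun x => (μ x)ᵀ) u := transpose_rep h
  have hmin' : ∀ (m : ℕ) (u' : Fin m → K) (μ' : X → Matrix (Fin m) (Fin m) K) (v' : Fin m → K),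
      IsLinRep (fun w => S w.reverse) u' μ' v' → n ≤ m := by
    intro m u' μ' v' h'
    have h'' : IsLinRep S v' (fun x => (μ' x)ᵀ) u' := by
      have := transpose_rep h'
      simpa using this
    exact hmin m v' _ u' h''
  have hspan := span_reach_eq_top htr hmin'
  -- the dot-product-with-z functional kills the whole space
  let f : (Fin n → K) →ₗ[K] K :=
    { toFun := fun y => z ⬝ᵥ y
      map_add' := fun a b => dotProduct_add z a b
      map_smul' := fun c a => dotProduct_smul c z a }
  have hker : Submodule.span K (Set.range fun w : List X => v ᵥ* wordProd (fun x => (μ x)ᵀ) w)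
      ≤ LinearMap.ker f := by
    rw [Submodule.span_le]
    rintro y ⟨w, rfl⟩
    have : v ᵥ* wordProd (fun x => (μ x)ᵀ) w = wordProd μ w.reverse *ᵥ v := by
      rw [wordProd_transpose, Matrix.vecMul_transpose]
    simp only [SetLike.mem_coe, LinearMap.mem_ker]
    show z ⬝ᵥ (v ᵥ* wordProd (fun x => (μ x)ᵀ) w) = 0
    rw [this]
    exact hz w.reverse
  rw [hspan, top_le_iff] at hker
  funext i
  have : f (Pi.single i 1) = 0 := by rw [← LinearMap.mem_ker, hker]; trivial
  have h1 : z ⬝ᵥ Pi.single i 1 = 0 := this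
  rwa [dotProduct_single, mul_one] at h1

/-- Rows reached by a deterministic automaton are multiples of standard basis vectors. -/
lemma det_row {n : ℕ} {u₀ : Fin n → K} {μ₀ : X → Matrix (Fin n) (Fin n) K}
    (hdet : IsDeterministic u₀ μ₀) (w : List X) :
    u₀ ᵥ* wordProd μ₀ w = 0 ∨
      ∃ (p : Fin n) (c : K), c ≠ 0 ∧ u₀ ᵥ* wordProd μ₀ w = c • (Pi.single p 1 : Fin n → K) := by
  classical
  induction w using List.reverseRecOn with
  | nil =>
      rw [wordProd_nil, Matrix.vecMul_one]
      by_cases h0 : u₀ = 0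
      · exact Or.inl h0
      · right
        obtain ⟨p, hp⟩ : ∃ p, u₀ p ≠ 0 := by
          by_contra hc
          push_neg at hc
          exact h0 (funext fun i => by simpa using hc i)
        refine ⟨p, u₀ p, hp, funext fun j => ?_⟩
        by_cases hj : j = p
        · subst hj; simp
        · have : u₀ j = 0 := by
            by_contra hji
            exact hj (hdet.1 j p hji hp)
          simp [this, Pi.single_apply, hj]
  | append_singleton w x ih =>
      rw [wordProd_concat, ← Matrix.vecMul_vecMul]
      rcases ih with h0 | ⟨p, c, hc, heq⟩
      · rw [h0, Matrix.zero_vecMul]; exact Or.inl rfl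
      · rw [heq, Matrix.smul_vecMul, Matrix.single_vecMul]
        by_cases hrow : ∀ q, μ₀ x p q = 0
        · left
          funext j
          simp [hrow j]
        · right
          push_neg at hrow
          obtain ⟨q, hq⟩ := hrow
          refine ⟨q, c * μ₀ x p q, mul_ne_zero hc hq, funext fun j => ?_⟩
          by_cases hj : j = q
          · subst hj; simp [mul_comm]
          · have : μ₀ x p j = 0 := by
              by_contra hji
              exact hj (hdet.2 x p j q hji hq)
            simp [this, Pi.single_apply, hj]

lemma forward_dir {n₀ n : ℕ} {S : List X → K}
    {u₀ : Fin n₀ → K} {μ₀ : X → Matrix (Fin n₀) (Fin n₀) K} {v₀ : Fin n₀ → K}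
    (hrep₀ : IsLinRep S u₀ μ₀ v₀) (hdet : IsDeterministic u₀ μ₀)
    {u : Fin n → K} {μ : X → Matrix (Fin n) (Fin n) K} {v : Fin n → K}
    (hrep : IsLinRep S u μ v)
    (hmin : ∀ (m : ℕ) (u' : Fin m → K) (μ' : X → Matrix (Fin m) (Fin m) K) (v' : Fin m → K),
      IsLinRep S u' μ' v' → n ≤ m) :
    HullDimLE1 u μ := by
  classical
  have obs : ∀ z : Fin n → K, (∀ w : List X, z ⬝ᵥ (wordProd μ w *ᵥ v) = 0) → z = 0 :=
    fun z hz => observability hrep hmin hz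
  have key : ∀ w : List X, u ᵥ* wordProd μ w ≠ 0 →
      ∃ (p : Fin n₀) (c : K), c ≠ 0 ∧ u₀ ᵥ* wordProd μ₀ w = c • (Pi.single p 1 : Fin n₀ → K) := by
    intro w hw
    rcases det_row hdet w with h0 | h
    · exfalso
      apply hw
      apply obs
      intro w'
      have e1 : (u ᵥ* wordProd μ w) ⬝ᵥ (wordProd μ w' *ᵥ v) = S (w ++ w') :=
        (split_eq hrep w w').symm
      rw [e1, split_eq hrep₀ w w', h0, zero_dotProduct]
    · exact h
  set P : Fin n₀ → Prop := fun p => ∃ w : List X, u ᵥ* wordProd μ w ≠ 0 ∧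
    ∃ c : K, c ≠ 0 ∧ u₀ ᵥ* wordProd μ₀ w = c • (Pi.single p 1 : Fin n₀ → K) with hP
  set V : Fin n₀ → Submodule K (Fin n → K) := fun p =>
    if h : P p then K ∙ (u ᵥ* wordProd μ (Classical.choose h)) else ⊥ with hV
  have hVrank : ∀ p, Module.finrank K (V p) ≤ 1 := by
    intro p
    rw [hV]
    dsimp only
    by_cases hp : P p
    · beta_reduce; rw [dif_pos hp]
      exact le_of_eq (finrank_span_singleton (Classical.choose_spec hp).1)
    · beta_reduce; rw [dif_neg hp]
      simp
  refine ⟨n₀ + 1, fun i => if h : (i : ℕ) < n₀ then V ⟨(i : ℕ), h⟩ else ⊥, ?_, ?_⟩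
  · intro i
    dsimp only
    by_cases h : (i : ℕ) < n₀
    · beta_reduce; rw [dif_pos h]
      apply hVrank
    · beta_reduce; rw [dif_neg h]
      simp
  · intro w
    by_cases hw : u ᵥ* wordProd μ w = 0
    · refine ⟨Fin.last n₀, ?_⟩
      have hnlt : ¬((Fin.last n₀ : Fin (n₀ + 1)) : ℕ) < n₀ := by simp
      dsimp only
      rw [dif_neg hnlt]
      show u ᵥ* wordProd μ w ∈ (⊥ : Submodule K (Fin n → K))
      rw [hw]
      exact Submodule.zero_mem ⊥
    · obtain ⟨p, c, hc, hpc⟩ := key w hw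
      have hPp : P p := ⟨w, hw, c, hc, hpc⟩
      refine ⟨p.castSucc, ?_⟩
      have hlt : ((p.castSucc : Fin (n₀ + 1)) : ℕ) < n₀ := by simpa using p.isLt
      dsimp only
      rw [dif_pos hlt]
      have hfin : (⟨((p.castSucc : Fin (n₀ + 1)) : ℕ), hlt⟩ : Fin n₀) = p := by
        apply Fin.ext
        simp
      rw [hfin, hV]
      dsimp only
      rw [dif_pos hPp]
      obtain ⟨hw₀, c₀, hc₀, hpc₀⟩ := Classical.choose_spec hPp
      set w₀ := Classical.choose hPp with hw₀def
      rw [Submodule.mem_span_singleton]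
      refine ⟨c₀⁻¹ * c, ?_⟩
      have hz : ∀ w' : List X,
          ((u ᵥ* wordProd μ w) - (c₀⁻¹ * c) • (u ᵥ* wordProd μ w₀)) ⬝ᵥ
            (wordProd μ w' *ᵥ v) = 0 := by
        intro w'
        rw [sub_dotProduct, smul_dotProduct]
        have e1 : (u ᵥ* wordProd μ w) ⬝ᵥ (wordProd μ w' *ᵥ v) = S (w ++ w') :=
          (split_eq hrep w w').symm
        have e2 : (u ᵥ* wordProd μ w₀) ⬝ᵥ (wordProd μ w' *ᵥ v) = S (w₀ ++ w') :=
          (split_eq hrep w₀ w').symm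
        rw [e1, e2, split_eq hrep₀ w w', split_eq hrep₀ w₀ w', hpc, hpc₀,
          smul_dotProduct, smul_dotProduct]
        rw [smul_eq_mul, smul_eq_mul, smul_eq_mul]
        field_simp
        ring
      have hsub := obs _ hz
      rw [sub_eq_zero] at hsub
      exact hsub.symm

lemma backward_dir {n : ℕ} {S : List X → K}
    {u : Fin n → K} {μ : X → Matrix (Fin n) (Fin n) K} {v : Fin n → K}
    (hrep : IsLinRep S u μ v) (hhull : HullDimLE1 u μ) :
    ∃ (m : ℕ) (u' : Fin m → K) (μ' : X → Matrix (Fin m) (Fin m) K) (v' : Fin m → K),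
      IsLinRep S u' μ' v' ∧ IsDeterministic u' μ' := by
  classical
  obtain ⟨k, W, hWrank, hWmem⟩ := hhull
  set g : List X → (Fin n → K) := fun w => u ᵥ* wordProd μ w with hg
  have hWmem' : ∀ w : List X, g w ∈ W (Classical.choose (hWmem w)) :=
    fun w => Classical.choose_spec (hWmem w)
  set idx : List X → Fin k := fun w => Classical.choose (hWmem w) with hidx
  set inh : Fin k → Prop := fun i => ∃ w : List X, g w ∈ W i ∧ g w ≠ 0 with hinh
  set r : Fin k → (Fin n → K) :=
    fun i => if h : inh i then g (Classical.choose h) else 0 with hr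
  have r_spec : ∀ (i : Fin k) (w : List X), g w ∈ W i → ∃ c : K, g w = c • r i := by
    intro i w hwi
    by_cases h0 : g w = 0
    · exact ⟨0, by rw [h0, zero_smul]⟩
    · have hi : inh i := ⟨w, hwi, h0⟩
      obtain ⟨hmem₀, hne₀⟩ := Classical.choose_spec hi
      have hri : r i = g (Classical.choose hi) := by
        rw [hr]; dsimp only; rw [dif_pos hi]
      have hle : (K ∙ r i) ≤ W i := by
        rw [Submodule.span_singleton_le_iff_mem, hri]; exact hmem₀
      have h1 : Module.finrank K (K ∙ r i) = 1 :=
        finrank_span_singleton (by rw [hri]; exact hne₀)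
      have heq : (K ∙ r i) = W i := by
        apply Submodule.eq_of_le_of_finrank_le hle
        rw [h1]; exact hWrank i
      rw [← heq] at hwi
      obtain ⟨c, hc⟩ := Submodule.mem_span_singleton.mp hwi
      exact ⟨c, hc.symm⟩
  have g_concat : ∀ (w : List X) (x : X), g (w ++ [x]) = g w ᵥ* μ x := by
    intro w x; rw [hg]; dsimp only; rw [wordProd_concat, ← Matrix.vecMul_vecMul]
  have trans : ∀ (i : Fin k) (x : X), ∃ (j : Fin k) (c : K), r i ᵥ* μ x = c • r j := by
    intro i x
    by_cases h : inh i
    · have hri : r i = g (Classical.choose h) := by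
        rw [hr]; dsimp only; rw [dif_pos h]
      refine ⟨idx (Classical.choose h ++ [x]), ?_⟩
      obtain ⟨c, hc⟩ := r_spec _ _ (hWmem' (Classical.choose h ++ [x]))
      exact ⟨c, by rw [hri, ← g_concat, hc]⟩
    · refine ⟨i, 0, ?_⟩
      have hz : r i = 0 := by rw [hr]; dsimp only; rw [dif_neg h]
      rw [hz, Matrix.zero_vecMul, zero_smul]
  set jf : Fin k → X → Fin k := fun i x => Classical.choose (trans i x) with hjf
  set cf : Fin k → X → K :=
    fun i x => Classical.choose (Classical.choose_spec (trans i x)) with hcf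
  have cf_spec : ∀ (i : Fin k) (x : X), r i ᵥ* μ x = cf i x • r (jf i x) :=
    fun i x => Classical.choose_spec (Classical.choose_spec (trans i x))
  have hu0 : g [] = u := by rw [hg]; dsimp only; rw [wordProd_nil, Matrix.vecMul_one]
  obtain ⟨c₀, hc₀⟩ := r_spec (idx []) [] (hWmem' [])
  set i₀ : Fin k := idx [] with hi₀
  set u' : Fin k → K := Pi.single i₀ c₀ with hu'
  set μ' : X → Matrix (Fin k) (Fin k) K :=
    fun x => Matrix.of (fun i => Pi.single (jf i x) (cf i x)) with hμ'
  set v' : Fin k → K := fun i => r i ⬝ᵥ v with hv'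
  have inv : ∀ w : List X, ∃ (i : Fin k) (c : K),
      u' ᵥ* wordProd μ' w = Pi.single i c ∧ g w = c • r i := by
    intro w
    induction w using List.reverseRecOn with
    | nil =>
        exact ⟨i₀, c₀, by rw [wordProd_nil, Matrix.vecMul_one], hc₀⟩
    | append_singleton w x ih =>
        obtain ⟨i, c, h1, h2⟩ := ih
        refine ⟨jf i x, c * cf i x, ?_, ?_⟩
        · rw [wordProd_concat, ← Matrix.vecMul_vecMul, h1, Matrix.single_vecMul]
          funext j
          show c * (Pi.single (jf i x) (cf i x) : Fin k → K) j
              = (Pi.single (jf i x) (c * cf i x) : Fin k → K) j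
          rw [Pi.single_apply, Pi.single_apply, mul_ite, mul_zero]
        · rw [g_concat, h2, Matrix.smul_vecMul, cf_spec, smul_smul]
  refine ⟨k, u', μ', v', ?_, ?_, ?_⟩
  · intro w
    obtain ⟨i, c, h1, h2⟩ := inv w
    rw [Matrix.dotProduct_mulVec, h1, single_dotProduct]
    have hv'i : v' i = r i ⬝ᵥ v := rfl
    rw [hv'i, linrep_eq hrep w, show u ᵥ* wordProd μ w = g w from rfl, h2,
      smul_dotProduct, smul_eq_mul]
  · intro i j hi hj
    rw [hu'] at hi hj
    have e1 : i = i₀ := by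
      by_contra h
      exact hi (Pi.single_eq_of_ne h _)
    have e2 : j = i₀ := by
      by_contra h
      exact hj (Pi.single_eq_of_ne h _)
    rw [e1, e2]
  · intro x p q q' hq hq'
    rw [hμ'] at hq hq'
    simp only [Matrix.of_apply] at hq hq'
    have e1 : q = jf p x := by
      by_contra h
      exact hq (Pi.single_eq_of_ne h _)
    have e2 : q' = jf p x := by
      by_contra h
      exact hq' (Pi.single_eq_of_ne h _)
    rw [e1, e2]

end DetAux

/-- A rational series is recognized by a deterministic weighted automaton if and only if
the linear hull of every minimal linear representation has dimension at most `1`. -/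
theorem determinizable_iff_hull {K X : Type*} [Field K] [Fintype X] [Nonempty X]
    (S : List X → K) (hrat : IsRational S) :
    (∃ (n : ℕ) (u : Fin n → K) (μ : X → Matrix (Fin n) (Fin n) K) (v : Fin n → K),
        IsLinRep S u μ v ∧ IsDeterministic u μ) ↔
    (∀ (n : ℕ) (u : Fin n → K) (μ : X → Matrix (Fin n) (Fin n) K) (v : Fin n → K),
        IsMinimalRep S u μ v → HullDimLE1 u μ) := by
  classical
  constructor
  · rintro ⟨n₀, u₀, μ₀, v₀, hrep₀, hdet⟩ n u μ v ⟨hrep, hmin⟩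
    exact DetAux.forward_dir hrep₀ hdet hrep hmin
  · intro h
    obtain ⟨n1, u1, μ1, v1, hrep1⟩ := hrat
    have hex : ∃ m : ℕ, ∃ (u : Fin m → K) (μ : X → Matrix (Fin m) (Fin m) K)
        (v : Fin m → K), IsLinRep S u μ v := ⟨n1, u1, μ1, v1, hrep1⟩
    obtain ⟨u, μ, v, hrep⟩ := Nat.find_spec hex
    have hmin : ∀ (m' : ℕ) (u' : Fin m' → K) (μ' : X → Matrix (Fin m') (Fin m') K)
        (v' : Fin m' → K), IsLinRep S u' μ' v' → Nat.find hex ≤ m' :=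
      fun m' u' μ' v' h' => Nat.find_min' hex ⟨u', μ', v', h'⟩
    exact DetAux.backward_dir hrep (h _ u μ v ⟨hrep, hmin⟩)
end

section
/- Let K be a field, X a finite nonempty alphabet, and S : X* → K a rational series such that the set of values { S(w) : w ∈ X* } is finite. Then S admits a deterministic linear representation (i.e., S is recognized by a deterministic weighted automaton). -/
open Submodule in
private lemma exists_finset_subset_span_eq {K : Type*} [Field K] {n : ℕ} (s : Set (Fin n → K)) :
    ∃ T : Finset (Fin n → K), ↑T ⊆ s ∧ span K (T : Set (Fin n → K)) = span K s := by
  classical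
  obtain ⟨G, hG⟩ := IsNoetherian.noetherian (span K s)
  choose f hf1 hf2 using fun b (hb : b ∈ span K s) => Submodule.mem_span_finite_of_mem_span hb
  refine ⟨G.attach.biUnion (fun b => if h : (b : Fin n → K) ∈ span K s then f _ h else ∅), ?_, ?_⟩
  · intro x hx
    simp only [Finset.coe_biUnion, Set.mem_iUnion] at hx
    obtain ⟨b, hb, hx⟩ := hx
    split_ifs at hx with h
    · exact hf1 _ h hx
    · simp at hx
  · apply le_antisymm
    · apply span_mono
      intro x hx
      simp only [Finset.coe_biUnion, Set.mem_iUnion] at hx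
      obtain ⟨b, hb, hx⟩ := hx
      split_ifs at hx with h
      · exact hf1 _ h hx
      · simp at hx
    · have key : span K (G : Set (Fin n → K)) ≤ span K ↑(G.attach.biUnion (fun b => if h : (b : Fin n → K) ∈ span K s then f _ h else ∅)) := by
        apply span_le.2
        intro b hb
        have hbs : b ∈ span K s := hG ▸ subset_span hb
        have := hf2 b hbs
        refine span_mono ?_ this
        intro x hx
        simp only [Finset.coe_biUnion, Set.mem_iUnion]
        exact ⟨⟨b, hb⟩, Finset.mem_attach _ _, by simp [hbs, hx]⟩
      rw [hG] at key
      exact key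

/-- A rational series taking only finitely many values is recognized by a deterministic
weighted automaton. -/
theorem finite_values_deterministic {K X : Type*} [Field K] [Fintype X] [Nonempty X]
    (S : List X → K) (hrat : IsRational S) (hfin : (Set.range S).Finite) :
    ∃ (n : ℕ) (u : Fin n → K) (μ : X → Matrix (Fin n) (Fin n) K) (v : Fin n → K),
      IsLinRep S u μ v ∧ IsDeterministic u μ := by
  classical
  obtain ⟨n, u, μ, v, hS⟩ := hrat
  -- the reachable vectors on the right
  set ρ : List X → (Fin n → K) := fun z => Matrix.mulVec (wordProd μ z) v with hρ
  set a : List X → (Fin n → K) := fun w => Matrix.vecMul u (wordProd μ w) with ha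
  have hwpapp : ∀ w z : List X, wordProd μ (w ++ z) = wordProd μ w * wordProd μ z := by
    intro w z
    simp [wordProd, List.map_append, List.prod_append]
  have hkey : ∀ w z : List X, S (w ++ z) = dotProduct (a w) (ρ z) := by
    intro w z
    rw [hS, hwpapp, ← Matrix.mulVec_mulVec, Matrix.dotProduct_mulVec]
  have hv : v = ρ [] := by simp [hρ, wordProd]
  obtain ⟨T, hT1, hT2⟩ := exists_finset_subset_span_eq (Set.range ρ)
  -- the finite "profile" of a word
  set g : List X → (T → K) := fun w t => dotProduct (a w) t.1 with hg
  -- agreement on T implies agreement on the span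
  have hag : ∀ w w' : List X, g w = g w' →
      ∀ c ∈ Submodule.span K (T : Set (Fin n → K)),
        dotProduct (a w) c = dotProduct (a w') c := by
    intro w w' hgw c hc
    induction hc using Submodule.span_induction with
    | mem x hx => exact congrFun hgw ⟨x, hx⟩
    | zero => simp
    | add x y _ _ hx hy => simp [dotProduct_add, hx, hy]
    | smul r x _ hx => simp [dotProduct_smul, hx]
  have hspanρ : ∀ z : List X, ρ z ∈ Submodule.span K (T : Set (Fin n → K)) := by
    intro z
    rw [hT2]
    exact Submodule.subset_span (Set.mem_range_self z)
  -- profiles determine values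
  have hSeq : ∀ w w' : List X, g w = g w' → S w = S w' := by
    intro w w' hgw
    have h1 : S w = dotProduct (a w) v := by
      have := hkey w []
      simpa [hv] using this
    have h2 : S w' = dotProduct (a w') v := by
      have := hkey w' []
      simpa [hv] using this
    rw [h1, h2, hv]
    exact hag w w' hgw _ (hspanρ [])
  -- profiles are a right congruence
  have hcong : ∀ (w w' : List X) (x : X), g w = g w' → g (w ++ [x]) = g (w' ++ [x]) := by
    intro w w' x hgw
    funext t
    obtain ⟨z, hz⟩ := hT1 t.2
    have haw : ∀ w₀ : List X, a (w₀ ++ [x]) = Matrix.vecMul (a w₀) (μ x) := by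
      intro w₀
      simp [ha, hwpapp, wordProd, ← Matrix.vecMul_vecMul]
    have hmv : Matrix.mulVec (μ x) t.1 = ρ (x :: z) := by
      rw [← hz]
      simp [hρ, wordProd, Matrix.mulVec_mulVec]
    have hside : ∀ w₀ : List X,
        dotProduct (a (w₀ ++ [x])) t.1 = dotProduct (a w₀) (ρ (x :: z)) := by
      intro w₀
      rw [haw, ← Matrix.dotProduct_mulVec, hmv]
    show dotProduct (a (w ++ [x])) t.1 = dotProduct (a (w' ++ [x])) t.1
    rw [hside, hside]
    exact hag w w' hgw _ (hspanρ _)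
  -- the finite state set
  have hQfin : (Set.range g).Finite := by
    apply Set.Finite.subset (Set.Finite.pi (fun _ : T => hfin))
    rintro - ⟨w, rfl⟩
    intro t _
    obtain ⟨z, hz⟩ := hT1 t.2
    have : g w t = S (w ++ z) := by rw [hkey, hz]
    rw [this]
    exact Set.mem_range_self _
  haveI : Fintype (Set.range g) := hQfin.fintype
  set Q := Set.range g
  set m := Fintype.card Q with hm
  set e : Fin m ≃ Q := (Fintype.equivFin Q).symm with he
  set qmk : List X → Q := fun w => ⟨g w, Set.mem_range_self w⟩ with hqmk
  set rep : Q → List X := fun q => q.2.choose with hrepdef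
  have hrep : ∀ q : Q, g (rep q) = q.1 := fun q => q.2.choose_spec
  set δ : Q → X → Q := fun q x => qmk (rep q ++ [x]) with hδdef
  have hδ : ∀ (w : List X) (x : X), δ (qmk w) x = qmk (w ++ [x]) := by
    intro w x
    apply Subtype.ext
    exact hcong _ _ x (hrep (qmk w))
  -- the deterministic representation
  refine ⟨m, fun i => if e i = qmk [] then 1 else 0,
    fun x => Matrix.of (fun i j => if e j = δ (e i) x then 1 else 0),
    fun i => S (rep (e i)), ?_, ?_, ?_⟩
  · -- IsLinRep
    set u' : Fin m → K := fun i => if e i = qmk [] then 1 else 0 with hu'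
    set μ' : X → Matrix (Fin m) (Fin m) K :=
      fun x => Matrix.of (fun i j => if e j = δ (e i) x then 1 else 0) with hμ'
    set v' : Fin m → K := fun i => S (rep (e i)) with hv'
    have hrun : ∀ w : List X,
        Matrix.vecMul u' (wordProd μ' w) = fun j => if e j = qmk w then 1 else 0 := by
      intro w
      induction w using List.reverseRecOn with
      | nil =>
        have : wordProd μ' [] = 1 := by simp [wordProd]
        rw [this, Matrix.vecMul_one]
      | append_singleton w x ih =>
        have hstep : wordProd μ' (w ++ [x]) = wordProd μ' w * μ' x := by
          simp [wordProd, List.map_append, List.prod_append]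
        rw [hstep, ← Matrix.vecMul_vecMul, ih]
        funext j
        show (∑ i, (if e i = qmk w then (1:K) else 0) * μ' x i j) = _
        rw [Finset.sum_eq_single (e.symm (qmk w))]
        · simp only [hμ', Matrix.of_apply, Equiv.apply_symm_apply, if_pos rfl, one_mul]
          rw [hδ w x]
          simp
        · intro i _ hi
          have : e i ≠ qmk w := fun h => hi (by rw [← h, Equiv.symm_apply_apply])
          simp [this]
        · intro h
          exact absurd (Finset.mem_univ _) h
    intro w
    rw [Matrix.dotProduct_mulVec, hrun]
    symm
    show (∑ j, (if e j = qmk w then (1:K) else 0) * v' j) = S w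
    rw [Finset.sum_eq_single (e.symm (qmk w))]
    · simp only [Equiv.apply_symm_apply, if_pos rfl, one_mul, hv', if_true, eq_self_iff_true]
      exact hSeq _ w (hrep (qmk w))
    · intro i _ hi
      have : e i ≠ qmk w := fun h => hi (by rw [← h, Equiv.symm_apply_apply])
      simp [this]
    · intro h
      exact absurd (Finset.mem_univ _) h
  · -- initial determinism
    intro i j hi hj
    have hi' : e i = qmk [] := by by_contra h; simp [h] at hi
    have hj' : e j = qmk [] := by by_contra h; simp [h] at hj
    exact e.injective (hi'.trans hj'.symm)
  · -- transition determinism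
    intro x p q q' hq hq'
    have hq1 : e q = δ (e p) x := by by_contra h; simp [h] at hq
    have hq2 : e q' = δ (e p) x := by by_contra h; simp [h] at hq'
    exact e.injective (hq1.trans hq2.symm)
end

section
/- Let K be a field, X a finite nonempty alphabet, and S : X* → K a series with a linear representation (u, μ, v) of rank n such that the set Ω = { u·μ(w) : w ∈ X* } ⊆ K^{1×n} is contained in a finite union of vector subspaces of dimension at most 1. Then S admits a deterministic linear representation. -/
/-- If a series has a linear representation whose linear hull has dimension at most `1`,
then it admits a deterministic linear representation. -/
theorem hull_deterministic {K X : Type*} [Field K] [Fintype X] [Nonempty X]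
    (S : List X → K) {n : ℕ} (u : Fin n → K) (μ : X → Matrix (Fin n) (Fin n) K)
    (v : Fin n → K) (hrep : IsLinRep S u μ v) (hhull : HullDimLE1 u μ) :
    ∃ (m : ℕ) (u' : Fin m → K) (μ' : X → Matrix (Fin m) (Fin m) K) (v' : Fin m → K),
      IsLinRep S u' μ' v' ∧ IsDeterministic u' μ' := by
  classical
  obtain ⟨k, W, hWdim, hmem⟩ := hhull
  set r : List X → (Fin n → K) := fun w => Matrix.vecMul u (wordProd μ w) with hrdef
  have rnil : r [] = u := by
    simp [hrdef, wordProd]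
  have rsnoc : ∀ (w : List X) (x : X), r (w ++ [x]) = Matrix.vecMul (r w) (μ x) := by
    intro w x
    simp [hrdef, wordProd, Matrix.vecMul_vecMul]
  -- two elements of a ≤1-dimensional subspace are proportional
  have span_le : ∀ (i : Fin k) (z t : Fin n → K), z ∈ W i → t ∈ W i → t ≠ 0 →
      ∃ a : K, z = a • t := by
    intro i z t hz ht htne
    have h1 : Submodule.span K ({t} : Set (Fin n → K)) ≤ W i :=
      Submodule.span_le.2 (by simpa using ht)
    have h2 : Module.finrank K (Submodule.span K ({t} : Set (Fin n → K))) = 1 :=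
      finrank_span_singleton htne
    have heq : Submodule.span K ({t} : Set (Fin n → K)) = W i := by
      apply Submodule.eq_of_le_of_finrank_le h1
      rw [h2]; exact hWdim i
    have hz' : z ∈ Submodule.span K ({t} : Set (Fin n → K)) := heq ▸ hz
    obtain ⟨a, ha⟩ := Submodule.mem_span_singleton.1 hz'
    exact ⟨a, ha.symm⟩
  set T : Fin k → (Fin n → K) := fun i =>
    if h : ∃ w, r w ∈ W i ∧ r w ≠ 0 then r (Classical.choose h) else 0 with hTdef
  set c : Fin (k + 1) → (Fin n → K) := Fin.cons 0 T with hcdef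
  set σf : (Fin n → K) → Fin (k + 1) := fun z =>
    if h : z ≠ 0 ∧ ∃ i, z ∈ W i then (Classical.choose h.2).succ else 0 with hσdef
  set lam : (Fin n → K) → K := fun z =>
    if h : ∃ a : K, z = a • c (σf z) then Classical.choose h else 0 with hlamdef
  have lamspec : ∀ z, (∃ a : K, z = a • c (σf z)) → z = lam z • c (σf z) := by
    intro z h
    rw [hlamdef]
    simp only [dif_pos h]
    exact Classical.choose_spec h
  -- every reachable vector is proportional to its representative
  have goodr : ∀ w, ∃ a : K, r w = a • c (σf (r w)) := by
    intro w
    by_cases h0 : r w = 0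
    · exact ⟨0, by simp [h0]⟩
    · have hex : r w ≠ 0 ∧ ∃ i, r w ∈ W i := ⟨h0, hmem w⟩
      have hσ : σf (r w) = (Classical.choose hex.2).succ := by
        rw [hσdef]; simp only [dif_pos hex]
      set i0 := Classical.choose hex.2 with hi0def
      have hi0 : r w ∈ W i0 := Classical.choose_spec hex.2
      have hTex : ∃ w', r w' ∈ W i0 ∧ r w' ≠ 0 := ⟨w, hi0, h0⟩
      have hT : T i0 = r (Classical.choose hTex) := by
        rw [hTdef]; simp only [dif_pos hTex]
      have hTspec := Classical.choose_spec hTex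
      have hTmem : T i0 ∈ W i0 := by rw [hT]; exact hTspec.1
      have hTne : T i0 ≠ 0 := by rw [hT]; exact hTspec.2
      obtain ⟨a, ha⟩ := span_le i0 (r w) (T i0) hi0 hTmem hTne
      refine ⟨a, ?_⟩
      rw [hσ]
      have : c (Fin.succ i0) = T i0 := by rw [hcdef]; simp
      rw [this]; exact ha
  -- representatives are either 0 or reachable
  have crange : ∀ q : Fin (k + 1), c q = 0 ∨ ∃ w, c q = r w := by
    intro q
    refine Fin.cases ?_ ?_ q
    · left; rw [hcdef]; simp
    · intro i
      have hci : c (Fin.succ i) = T i := by rw [hcdef]; simp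
      rw [hci, hTdef]
      by_cases h : ∃ w, r w ∈ W i ∧ r w ≠ 0
      · right; simp only [dif_pos h]; exact ⟨Classical.choose h, rfl⟩
      · left; simp only [dif_neg h]
  have goodc : ∀ (q : Fin (k + 1)) (x : X),
      ∃ a : K, Matrix.vecMul (c q) (μ x) =
        a • c (σf (Matrix.vecMul (c q) (μ x))) := by
    intro q x
    rcases crange q with h | ⟨w, hw⟩
    · refine ⟨0, ?_⟩; rw [h]; simp
    · rw [hw, ← rsnoc w x]; exact goodr (w ++ [x])
  -- the deterministic representation
  set u' : Fin (k + 1) → K := fun q => if q = σf (r []) then lam (r []) else 0 with hu'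
  set μ' : X → Matrix (Fin (k + 1)) (Fin (k + 1)) K := fun x p q =>
    if q = σf (Matrix.vecMul (c p) (μ x)) then lam (Matrix.vecMul (c p) (μ x)) else 0
    with hμ'
  set v' : Fin (k + 1) → K := fun q => dotProduct (c q) v with hv'
  refine ⟨k + 1, u', μ', v', ?_, ?_, ?_⟩
  · -- IsLinRep
    have inv : ∀ w : List X, ∃ (q0 : Fin (k + 1)) (a : K),
        Matrix.vecMul u' (wordProd μ' w) = (fun q => if q = q0 then a else 0)
          ∧ r w = a • c q0 := by
      intro w
      induction w using List.reverseRecOn with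
      | nil =>
        refine ⟨σf (r []), lam (r []), ?_, lamspec _ (goodr [])⟩
        simp [wordProd, hu']
      | append_singleton w x ih =>
        obtain ⟨q0, a, h1, h2⟩ := ih
        set z := Matrix.vecMul (c q0) (μ x) with hzdef
        refine ⟨σf z, a * lam z, ?_, ?_⟩
        · have hwp : wordProd μ' (w ++ [x]) = wordProd μ' w * μ' x := by
            simp [wordProd]
          rw [hwp, ← Matrix.vecMul_vecMul, h1]
          funext q
          simp only [Matrix.vecMul, dotProduct, ite_mul, zero_mul]
          rw [Finset.sum_ite_eq' Finset.univ q0]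
          simp only [Finset.mem_univ, if_true, hμ', mul_ite, mul_zero]
          rfl
        · rw [rsnoc, h2]
          have hsm : Matrix.vecMul (a • c q0) (μ x) = a • z := by
            funext q
            simp [Matrix.vecMul, dotProduct, hzdef, Finset.mul_sum, mul_assoc]
          rw [hsm]
          conv_lhs => rw [lamspec z (goodc q0 x)]
          rw [smul_smul]
    intro w
    obtain ⟨q0, a, h1, h2⟩ := inv w
    rw [hrep w, Matrix.dotProduct_mulVec, Matrix.dotProduct_mulVec, h1]
    have hru : Matrix.vecMul u (wordProd μ w) = r w := rfl
    rw [hru, h2]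
    simp only [dotProduct, ite_mul, zero_mul]
    rw [Finset.sum_ite_eq' Finset.univ q0]
    simp [hv', dotProduct, Finset.mul_sum, mul_assoc]
  · -- initial determinism
    intro i j hi hj
    have hi' : i = σf (r []) := by by_contra h; simp [hu', h] at hi
    have hj' : j = σf (r []) := by by_contra h; simp [hu', h] at hj
    rw [hi', hj']
  · -- transition determinism
    intro x p q q' hq hq'
    have h3 : q = σf (Matrix.vecMul (c p) (μ x)) := by
      by_contra h; simp [hμ', h] at hq
    have h4 : q' = σf (Matrix.vecMul (c p) (μ x)) := by
      by_contra h; simp [hμ', h] at hq'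
    rw [h3, h4]
end

section
/- Let K be a field and V a finite-dimensional K-vector space. Let (Y_i)_{i ∈ I} be an arbitrary family of subsets of V such that each Y_i is a finite union of K-vector subspaces of V. Then the intersection ⋂_{i ∈ I} Y_i is again a finite union of K-vector subspaces of V; in fact it equals the intersection of finitely many of the Y_i. Consequently, the collection of finite unions of subspaces forms the closed sets of a (noetherian) topology on V. -/
/-- `Y` is a finite union of vector subspaces of `V`. -/
def IsFinUnionSubspaces (K : Type*) {V : Type*} [Field K] [AddCommGroup V] [Module K V]
    (Y : Set V) : Prop :=
  ∃ (k : ℕ) (W : Fin k → Submodule K V), Y = ⋃ i, (W i : Set V)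

section Aux

variable {K V : Type*} [Field K] [AddCommGroup V] [Module K V]

lemma isFUS_univ : IsFinUnionSubspaces K (Set.univ : Set V) :=
  ⟨1, fun _ => ⊤, by simp [Set.iUnion_const]⟩

lemma isFUS_empty : IsFinUnionSubspaces K (∅ : Set V) :=
  ⟨0, Fin.elim0, by simp⟩

lemma isFUS_inter {Y Z : Set V} (hY : IsFinUnionSubspaces K Y) (hZ : IsFinUnionSubspaces K Z) :
    IsFinUnionSubspaces K (Y ∩ Z) := by
  obtain ⟨k, W, rfl⟩ := hY
  obtain ⟨l, U, rfl⟩ := hZ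
  refine ⟨k * l, fun i => W (finProdFinEquiv.symm i).1 ⊓ U (finProdFinEquiv.symm i).2, ?_⟩
  ext x
  simp only [Set.mem_inter_iff, Set.mem_iUnion, SetLike.mem_coe, Submodule.mem_inf]
  constructor
  · rintro ⟨⟨i, hi⟩, ⟨j, hj⟩⟩
    exact ⟨finProdFinEquiv (i, j), by simpa using ⟨hi, hj⟩⟩
  · rintro ⟨i, hi, hj⟩
    exact ⟨⟨_, hi⟩, ⟨_, hj⟩⟩

lemma isFUS_union {Y Z : Set V} (hY : IsFinUnionSubspaces K Y) (hZ : IsFinUnionSubspaces K Z) :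
    IsFinUnionSubspaces K (Y ∪ Z) := by
  obtain ⟨k, W, rfl⟩ := hY
  obtain ⟨l, U, rfl⟩ := hZ
  refine ⟨k + l, fun i => Sum.elim W U (finSumFinEquiv.symm i), ?_⟩
  ext x
  simp only [Set.mem_union, Set.mem_iUnion, SetLike.mem_coe]
  constructor
  · rintro (⟨i, hi⟩ | ⟨j, hj⟩)
    · exact ⟨finSumFinEquiv (Sum.inl i), by simpa using hi⟩
    · exact ⟨finSumFinEquiv (Sum.inr j), by simpa using hj⟩
  · rintro ⟨i, hi⟩
    rcases h : finSumFinEquiv.symm i with j | j <;> rw [h] at hi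
    · exact Or.inl ⟨j, hi⟩
    · exact Or.inr ⟨j, hi⟩

/-- Over an infinite field, a subspace contained in a finite union of subspaces is
contained in one of them. -/
lemma le_of_subset_iUnion [Infinite K] {k : ℕ} (W : Submodule K V) (p : Fin k → Submodule K V)
    (h : (W : Set V) ⊆ ⋃ i, (p i : Set V)) : ∃ i, W ≤ p i := by
  have hcov : ⋃ i, (((p i).comap W.subtype : Submodule K W) : Set W) = Set.univ := by
    ext x
    simp only [Set.mem_iUnion, SetLike.mem_coe, Submodule.mem_comap, Set.mem_univ, iff_true]
    have := h x.2
    simpa using this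
  obtain ⟨i, hi⟩ := Subspace.exists_eq_top_of_iUnion_eq_univ hcov
  refine ⟨i, fun x hx => ?_⟩
  have : (⟨x, hx⟩ : W) ∈ (p i).comap W.subtype := by rw [hi]; trivial
  exact this

variable (K) in
/-- The maximal subspaces contained in `Y`. -/
def maxSubs (Y : Set V) : Set (Submodule K V) :=
  {W | (W : Set V) ⊆ Y ∧ ∀ U : Submodule K V, (U : Set V) ⊆ Y → W ≤ U → U = W}

lemma exists_maxSub [FiniteDimensional K V] {Y : Set V} {W : Submodule K V}
    (hW : (W : Set V) ⊆ Y) : ∃ W', W ≤ W' ∧ W' ∈ maxSubs K Y := by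
  obtain ⟨m, ⟨hmY, hWm⟩, hmax⟩ :=
    (IsWellFounded.wf (α := Submodule K V) (r := (· > ·))).has_min
      {U | (U : Set V) ⊆ Y ∧ W ≤ U} ⟨W, hW, le_rfl⟩
  refine ⟨m, hWm, hmY, fun U hU hle => ?_⟩
  by_contra hne
  exact hmax U ⟨hU, hWm.trans hle⟩ (lt_of_le_of_ne hle (Ne.symm hne))

lemma maxSubs_cover [FiniteDimensional K V] {Y : Set V} (hY : IsFinUnionSubspaces K Y) {x : V}
    (hx : x ∈ Y) : ∃ W ∈ maxSubs K Y, x ∈ W := by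
  obtain ⟨k, p, rfl⟩ := hY
  obtain ⟨i, hi⟩ := Set.mem_iUnion.1 hx
  obtain ⟨W', hle, hmem⟩ := exists_maxSub (W := p i) (Set.subset_iUnion (fun i => ((p i : Set V))) i)
  exact ⟨W', hmem, hle hi⟩

lemma maxSubs_finite [FiniteDimensional K V] {Y : Set V} (hY : IsFinUnionSubspaces K Y) :
    (maxSubs K Y).Finite := by
  cases finite_or_infinite V with
  | inl h =>
    have : Finite (Submodule K V) := Finite.of_injective _ SetLike.coe_injective
    exact Set.toFinite _
  | inr h =>
    have : Infinite K := by
      by_contra hK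
      rw [not_infinite_iff_finite] at hK
      have : Finite V := Module.finite_of_finite K
      exact not_finite V
    obtain ⟨k, p, rfl⟩ := hY
    refine (Set.finite_range p).subset ?_
    rintro W ⟨hWY, hmax⟩
    obtain ⟨i, hi⟩ := le_of_subset_iUnion W p hWY
    exact ⟨i, hmax (p i) (Set.subset_iUnion (fun i => ((p i : Set V))) i) hi⟩

lemma maxSubs_eq_self [FiniteDimensional K V] {Y : Set V} (hY : IsFinUnionSubspaces K Y) :
    Y = ⋃ W ∈ maxSubs K Y, (W : Set V) := by
  ext x
  simp only [Set.mem_iUnion, SetLike.mem_coe]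
  constructor
  · intro hx
    obtain ⟨W, h1, h2⟩ := maxSubs_cover hY hx
    exact ⟨W, h1, h2⟩
  · rintro ⟨W, hW, hx⟩
    exact hW.1 hx

open Module in
/-- The strict-subset relation on finite unions of subspaces is well-founded. -/
lemma isFUS_wf (K V : Type*) [Field K] [AddCommGroup V] [Module K V] [FiniteDimensional K V] :
    WellFounded (fun A B : {S : Set V // IsFinUnionSubspaces K S} => A.1 ⊂ B.1) := by
  classical
  have happly : ∀ (F : Finset (Submodule K V)) (e : ℕᵒᵈ),
      (F.sum fun W => Finsupp.single (OrderDual.toDual (finrank K (W : Submodule K V))) (1 : ℕ)) e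
        = (F.filter fun W => finrank K (W : Submodule K V) = OrderDual.ofDual e).card := by
    intro F e
    rw [Finset.sum_apply', Finset.card_filter]
    refine Finset.sum_congr rfl fun W _ => ?_
    rw [Finsupp.single_apply]
    by_cases h : finrank K (W : Submodule K V) = OrderDual.ofDual e
    · rw [if_pos h, if_pos]
      exact congrArg OrderDual.toDual h
    · rw [if_neg h, if_neg]
      exact fun hc => h (congrArg OrderDual.ofDual hc)
  have hdec : ∀ A B : {S : Set V // IsFinUnionSubspaces K S}, A.1 ⊂ B.1 →
      (toLex ((maxSubs_finite A.2).toFinset.sum fun W =>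
        Finsupp.single (OrderDual.toDual (finrank K (W : Submodule K V))) (1 : ℕ)) <
       toLex ((maxSubs_finite B.2).toFinset.sum fun W =>
        Finsupp.single (OrderDual.toDual (finrank K (W : Submodule K V))) (1 : ℕ))) := by
    rintro ⟨Y', hY'⟩ ⟨Y, hY⟩ hAB
    set M' := (maxSubs_finite hY').toFinset with hM'
    set M := (maxSubs_finite hY).toFinset with hM
    set N' : ℕ → Finset (Submodule K V) :=
      fun d => M'.filter fun W => finrank K (W : Submodule K V) = d with hN'
    set N : ℕ → Finset (Submodule K V) :=
      fun d => M.filter fun W => finrank K (W : Submodule K V) = d with hN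
    set D : Set ℕ := {d | N' d ≠ N d} with hD
    have hAB' : Y' ⊂ Y := hAB
    have hDfin : D.Finite := by
      refine (Set.finite_Iic (finrank K V)).subset ?_
      intro d hd
      have hne : (N' d ∪ N d).Nonempty := by
        rcases Finset.eq_empty_or_nonempty (N' d ∪ N d) with h | h
        · rcases Finset.union_eq_empty.1 h with ⟨h1, h2⟩
          exact absurd (h1.trans h2.symm) hd
        · exact h
      obtain ⟨W, hW⟩ := hne
      have : finrank K (W : Submodule K V) = d := by
        rcases Finset.mem_union.1 hW with h | h
        · exact (Finset.mem_filter.1 h).2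
        · exact (Finset.mem_filter.1 h).2
      rw [Set.mem_Iic, ← this]
      exact Submodule.finrank_le W
    have hDne : D.Nonempty := by
      by_contra hcon
      rw [Set.not_nonempty_iff_eq_empty] at hcon
      have hall : ∀ d, N' d = N d := by
        intro d
        have : d ∉ D := by rw [hcon]; exact Set.notMem_empty d
        exact not_not.1 this
      have hMM : M' = M := by
        ext W
        have hd := hall (finrank K (W : Submodule K V))
        constructor
        · intro hW
          have : W ∈ N' (finrank K (W : Submodule K V)) := Finset.mem_filter.2 ⟨hW, rfl⟩
          exact (Finset.mem_filter.1 (hd ▸ this)).1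
        · intro hW
          have : W ∈ N (finrank K (W : Submodule K V)) := Finset.mem_filter.2 ⟨hW, rfl⟩
          exact (Finset.mem_filter.1 (hd.symm ▸ this)).1
      have hsets : maxSubs K Y' = maxSubs K Y := by
        rw [← (maxSubs_finite hY').coe_toFinset, ← (maxSubs_finite hY).coe_toFinset, ← hM', ← hM,
          hMM]
      have : Y = Y' := by
        rw [maxSubs_eq_self hY, maxSubs_eq_self hY', hsets]
      exact hAB'.ne this.symm
    obtain ⟨d, hdD, hdmax⟩ := Set.Finite.exists_maximalFor id D hDfin hDne
    have htop : ∀ e, d < e → N' e = N e := by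
      intro e he
      by_contra hne
      exact (not_le.2 he) (hdmax hne he.le)
    have hssub : N' d ⊂ N d := by
      refine Finset.ssubset_iff_subset_ne.2 ⟨?_, hdD⟩
      intro W' hW'
      obtain ⟨hW'M, hW'd⟩ := Finset.mem_filter.1 hW'
      have hW'max : W' ∈ maxSubs K Y' := (maxSubs_finite hY').mem_toFinset.1 hW'M
      have hW'Y : (W' : Set V) ⊆ Y := hW'max.1.trans hAB'.subset
      obtain ⟨W, hle, hWmax⟩ := exists_maxSub hW'Y
      have hdle : finrank K (W' : Submodule K V) ≤ finrank K (W : Submodule K V) :=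
        Submodule.finrank_mono hle
      rcases eq_or_lt_of_le hdle with heq | hlt
      · have hWW' : W' = W := Submodule.eq_of_le_of_finrank_eq hle heq
        exact Finset.mem_filter.2 ⟨(maxSubs_finite hY).mem_toFinset.2 (hWW' ▸ hWmax), hW'd⟩
      · exfalso
        have hWN : W ∈ N (finrank K (W : Submodule K V)) :=
          Finset.mem_filter.2 ⟨(maxSubs_finite hY).mem_toFinset.2 hWmax, rfl⟩
        have hWN' : W ∈ N' (finrank K (W : Submodule K V)) := by
          rw [htop (finrank K (W : Submodule K V)) (hW'd ▸ hlt)]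
          exact hWN
        have hWmaxY' : W ∈ maxSubs K Y' :=
          (maxSubs_finite hY').mem_toFinset.1 (Finset.mem_filter.1 hWN').1
        have heq : W = W' := hW'max.2 W hWmaxY'.1 hle
        rw [heq] at hlt
        exact lt_irrefl _ (hW'd ▸ hlt)
    refine Finsupp.lex_def.2 ⟨OrderDual.toDual d, fun e he => ?_, ?_⟩
    · simp only [ofLex_toLex]
      rw [happly, happly]
      have hde : d < OrderDual.ofDual e := he
      have hfe := htop (OrderDual.ofDual e) hde
      simp only [hN', hN] at hfe
      rw [hfe]
    · simp only [ofLex_toLex]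
      rw [happly, happly]
      exact Finset.card_lt_card hssub
  exact Subrelation.wf (fun {A B} h => hdec A B h)
    (InvImage.wf _ (Finsupp.Lex.wellFoundedLT (α := ℕᵒᵈ) (N := ℕ)).wf)

/-- An arbitrary intersection of finite unions of subspaces is a finite subintersection,
and in particular again a finite union of subspaces. -/
lemma isFUS_iInter [FiniteDimensional K V] {I : Type*} (Y : I → Set V)
    (hY : ∀ i, IsFinUnionSubspaces K (Y i)) :
    (∃ s : Finset I, (⋂ i, Y i) = ⋂ i ∈ s, Y i) ∧ IsFinUnionSubspaces K (⋂ i, Y i) := by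
  classical
  have hP : ∀ s : Finset I, IsFinUnionSubspaces K (⋂ i ∈ s, Y i) := by
    intro s
    induction s using Finset.induction with
    | empty => simpa using isFUS_univ
    | insert _ _ h ih => rw [Finset.set_biInter_insert]; exact isFUS_inter (hY _) ih
  obtain ⟨A, ⟨s₀, hs₀⟩, hmin⟩ := (isFUS_wf K V).has_min
      {A : {S : Set V // IsFinUnionSubspaces K S} | ∃ s : Finset I, A.1 = ⋂ i ∈ s, Y i}
      ⟨⟨_, hP ∅⟩, ∅, rfl⟩
  have hsub : ∀ i, A.1 ⊆ Y i := by
    intro i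
    have h1 : (⋂ j ∈ insert i s₀, Y j) ⊆ A.1 := by
      rw [hs₀]
      exact Set.biInter_mono (fun j hj => Finset.mem_insert_of_mem hj) fun _ _ => subset_rfl
    have h2 := hmin ⟨_, hP (insert i s₀)⟩ ⟨insert i s₀, rfl⟩
    have heq : (⋂ j ∈ insert i s₀, Y j) = A.1 := by
      by_contra hne
      exact h2 ⟨h1, fun hsub2 => hne (Set.Subset.antisymm h1 hsub2)⟩
    calc A.1 = ⋂ j ∈ insert i s₀, Y j := heq.symm
    _ ⊆ Y i := Set.biInter_subset_of_mem (Finset.mem_insert_self i s₀)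
  have hEq : (⋂ i, Y i) = A.1 := by
    refine Set.Subset.antisymm ?_ (Set.subset_iInter hsub)
    rw [hs₀]
    exact Set.subset_iInter₂ fun i _ => Set.iInter_subset Y i
  exact ⟨⟨s₀, by rw [hEq, hs₀]⟩, hEq ▸ A.2⟩

end Aux

/-- In a finite-dimensional vector space, an arbitrary intersection of finite unions of
subspaces is a finite subintersection, and is again a finite union of subspaces;
consequently the finite unions of subspaces are the closed sets of a noetherian
topology. -/
theorem finUnionSubspaces_topology {K V : Type*} [Field K] [AddCommGroup V] [Module K V]
    [FiniteDimensional K V] {I : Type*} (Y : I → Set V)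
    (hY : ∀ i, IsFinUnionSubspaces K (Y i)) :
    ((∃ s : Finset I, (⋂ i, Y i) = ⋂ i ∈ s, Y i) ∧
      IsFinUnionSubspaces K (⋂ i, Y i)) ∧
    ∃ t : TopologicalSpace V,
      (∀ Z : Set V, @IsClosed V t Z ↔ IsFinUnionSubspaces K Z) ∧
      @TopologicalSpace.NoetherianSpace V t := by
  classical
  refine ⟨isFUS_iInter Y hY, ?_⟩
  set T : Set (Set V) := {Z | IsFinUnionSubspaces K Z} with hT
  have hsInter : ∀ A, A ⊆ T → ⋂₀ A ∈ T := by
    intro A hA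
    have := (isFUS_iInter (fun Z : A => (Z : Set V)) (fun Z => hA Z.2)).2
    rwa [Set.sInter_eq_iInter] at *
  have hunion : ∀ A, A ∈ T → ∀ B, B ∈ T → A ∪ B ∈ T := fun A hA B hB => isFUS_union hA hB
  set t : TopologicalSpace V := TopologicalSpace.ofClosed T isFUS_empty hsInter hunion with ht
  have hclosed : ∀ Z : Set V, @IsClosed V t Z ↔ IsFinUnionSubspaces K Z := by
    intro Z
    rw [← @isOpen_compl_iff V Z t]
    have : @IsOpen V t Zᶜ ↔ Zᶜᶜ ∈ T := Iff.rfl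
    rw [this, compl_compl]
    exact Iff.rfl
  refine ⟨t, hclosed, ?_⟩
  letI := t
  refine ⟨?_⟩
  have hwf := isFUS_wf K V
  let g : TopologicalSpace.Opens V → {S : Set V // IsFinUnionSubspaces K S} := fun U =>
    ⟨(↑U)ᶜ, (hclosed (↑U)ᶜ).1 (isClosed_compl_iff.2 U.2)⟩
  refine Subrelation.wf (q := (· > ·))
    (r := InvImage (fun A B : {S : Set V // IsFinUnionSubspaces K S} => A.1 ⊂ B.1) g) ?_
    (InvImage.wf g hwf)
  intro a b hab
  have h1 : (b : Set V) < (a : Set V) := SetLike.coe_ssubset_coe.2 hab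
  exact compl_lt_compl_iff_lt.2 h1
end

section
/- Let K be a field, X a finite nonempty alphabet, and S : X* → K a rational series whose minimal linear representations have rank n ≥ 1. Let Γ = { S(w) : w ∈ X* } ⊆ K. Then S has a minimal linear representation (u, μ, v) of rank n such that every coordinate of u·μ(w) lies in Γ for every w ∈ X*, and v = e₁ is the first standard basis column vector. -/
open Matrix

theorem wordProd_nil {X K : Type*} [Semiring K] {n : ℕ} (μ : X → Matrix (Fin n) (Fin n) K) :
    wordProd μ ([] : List X) = 1 := rfl

theorem wordProd_cons {X K : Type*} [Semiring K] {n : ℕ} (μ : X → Matrix (Fin n) (Fin n) K)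
    (x : X) (w : List X) : wordProd μ (x :: w) = μ x * wordProd μ w := by
  simp [wordProd]

theorem wordProd_append {X K : Type*} [Semiring K] {n : ℕ} (μ : X → Matrix (Fin n) (Fin n) K)
    (w w' : List X) : wordProd μ (w ++ w') = wordProd μ w * wordProd μ w' := by
  simp [wordProd]

open Matrix in
theorem span_right_top {K X : Type*} [Field K] (S : List X → K) {n : ℕ}
    (u : Fin n → K) (μ : X → Matrix (Fin n) (Fin n) K) (v : Fin n → K)
    (hmin : IsMinimalRep S u μ v) :
    Submodule.span K {y : Fin n → K | ∃ w : List X, (wordProd μ w) *ᵥ v = y} = ⊤ := by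
  set T : Set (Fin n → K) := {y | ∃ w : List X, (wordProd μ w) *ᵥ v = y} with hT
  set W : Submodule K (Fin n → K) := Submodule.span K T with hW
  set m : ℕ := Module.finrank K W with hm
  let b : Module.Basis (Fin m) K W := Module.finBasis K W
  have hinv : ∀ (x : X) (y : Fin n → K), y ∈ W → (μ x) *ᵥ y ∈ W := by
    intro x y hy
    induction hy using Submodule.span_induction with
    | mem z hz =>
      obtain ⟨w, rfl⟩ := hz
      apply Submodule.subset_span
      exact ⟨x :: w, by rw [wordProd_cons, ← Matrix.mulVec_mulVec]⟩
    | zero => simp [Matrix.mulVec_zero]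
    | add a c _ _ ha hc => rw [Matrix.mulVec_add]; exact W.add_mem ha hc
    | smul a c _ hc => rw [Matrix.mulVec_smul]; exact W.smul_mem a hc
  let C : Matrix (Fin n) (Fin m) K := fun i j => (b j : Fin n → K) i
  have hC : ∀ y : W, C *ᵥ (b.repr y) = (y : Fin n → K) := by
    intro y
    conv_rhs => rw [← b.sum_repr y]
    ext i
    simp [Matrix.mulVec, dotProduct, C, mul_comm]
    conv_rhs => rw [← b.sum_repr y, Submodule.coe_sum, Finset.sum_apply]
    exact Finset.sum_congr rfl fun k _ => by simp [mul_comm]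
  let D : X → Matrix (Fin m) (Fin m) K := fun x =>
    fun i j => b.repr ⟨(μ x) *ᵥ (b j : Fin n → K), hinv x _ (b j).2⟩ i
  have hD : ∀ x, μ x * C = C * D x := by
    intro x
    ext i j
    have h1 : (μ x * C) i j = ((μ x) *ᵥ (b j : Fin n → K)) i := by
      simp [Matrix.mul_apply, Matrix.mulVec, dotProduct, C]
      rfl
    have h2 : (C * D x) i j = (C *ᵥ (fun k => D x k j)) i := by
      simp [Matrix.mul_apply, Matrix.mulVec, dotProduct]
    rw [h1, h2]
    have := hC ⟨(μ x) *ᵥ (b j : Fin n → K), hinv x _ (b j).2⟩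
    exact (congrFun this i).symm
  have hvW : v ∈ W := Submodule.subset_span ⟨[], by rw [wordProd_nil, Matrix.one_mulVec]⟩
  have hCv : C *ᵥ (b.repr ⟨v, hvW⟩) = v := hC ⟨v, hvW⟩
  have hWP : ∀ w : List X, wordProd μ w * C = C * wordProd D w := by
    intro w
    induction w with
    | nil => rw [wordProd_nil, wordProd_nil, Matrix.one_mul, Matrix.mul_one]
    | cons x w ih =>
      rw [wordProd_cons, wordProd_cons, Matrix.mul_assoc, ih, ← Matrix.mul_assoc, hD,
        Matrix.mul_assoc]
  have hrep : IsLinRep S (u ᵥ* C) D (b.repr ⟨v, hvW⟩) := by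
    intro w
    rw [hmin.1 w, ← Matrix.dotProduct_mulVec, Matrix.mulVec_mulVec, ← hWP,
      ← Matrix.mulVec_mulVec, hCv]
  have h1 : n ≤ m := hmin.2 m _ D _ hrep
  have h2 : m ≤ n := by
    have := Submodule.finrank_le W
    simpa [Module.finrank_fin_fun] using this
  exact Submodule.eq_top_of_finrank_eq (by rw [← hm, le_antisymm h2 h1, Module.finrank_fin_fun])

theorem wordProd_conj {K X : Type*} [Field K] {n : ℕ} (P : Matrix (Fin n) (Fin n) K)
    [Invertible P] (μ : X → Matrix (Fin n) (Fin n) K) (w : List X) :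
    wordProd (fun x => P⁻¹ * μ x * P) w = P⁻¹ * wordProd μ w * P := by
  induction w with
  | nil => rw [wordProd_nil, wordProd_nil, mul_one, Matrix.inv_mul_of_invertible]
  | cons x w ih =>
    rw [wordProd_cons, wordProd_cons, ih]
    calc P⁻¹ * μ x * P * (P⁻¹ * wordProd μ w * P)
        = P⁻¹ * μ x * ((P * P⁻¹) * wordProd μ w) * P := by
          simp only [mul_assoc]
      _ = P⁻¹ * (μ x * wordProd μ w) * P := by
          rw [Matrix.mul_inv_of_invertible, one_mul]; simp only [mul_assoc]


/-- A rational series of minimal rank `n ≥ 1` admits a minimal linear representation -/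
theorem good_basis_minimal_rep {K X : Type*} [Field K] [Fintype X] [Nonempty X]
    (S : List X → K) {n : ℕ} (hn : 1 ≤ n)
    (hmin : ∃ (u : Fin n → K) (μ : X → Matrix (Fin n) (Fin n) K) (v : Fin n → K),
      IsMinimalRep S u μ v) :
    ∃ (u : Fin n → K) (μ : X → Matrix (Fin n) (Fin n) K) (v : Fin n → K),
      IsMinimalRep S u μ v ∧
      (∀ (w : List X) (i : Fin n), ∃ w' : List X, Matrix.vecMul u (wordProd μ w) i = S w') ∧
      v = Pi.single (⟨0, hn⟩ : Fin n) 1 := by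
  obtain ⟨u, μ, v, h⟩ := hmin
  set i0 : Fin n := ⟨0, hn⟩
  -- v ≠ 0
  have hv0 : v ≠ 0 := by
    intro hv
    have hz : IsLinRep S (fun _ : Fin 0 => (0:K)) (fun _ => 0) (fun _ => 0) := by
      intro w
      rw [h.1 w, hv]
      simp [dotProduct]
    exact absurd (h.2 0 _ _ _ hz) (by omega)
  set T : Set (Fin n → K) := {y : Fin n → K | ∃ w : List X, (wordProd μ w) *ᵥ v = y} with hTdef
  have hvT : v ∈ T := ⟨[], by rw [wordProd_nil, Matrix.one_mulVec]⟩
  have hsp : Submodule.span K T = ⊤ := span_right_top S u μ v h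
  have hsing : LinearIndependent K (Subtype.val : ({v} : Set (Fin n → K)) → (Fin n → K)) :=
    (linearIndepOn_singleton_iff (R := K) (v := id)).mpr hv0
  obtain ⟨bset, hbT, hvb, hTb, hli⟩ :=
    exists_linearIndepOn_id_extension hsing (Set.singleton_subset_iff.mpr hvT)
  have hvmem : v ∈ bset := hvb rfl
  replace hli : LinearIndependent K (Subtype.val : bset → (Fin n → K)) := hli
  have hbspan : ⊤ ≤ Submodule.span K (Set.range (Subtype.val : bset → (Fin n → K))) := by
    rw [Subtype.range_coe]
    rw [← hsp]
    exact Submodule.span_le.mpr hTb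
  let bas : Module.Basis bset K (Fin n → K) := Module.Basis.mk hli hbspan
  haveI : Fintype bset := FiniteDimensional.fintypeBasisIndex bas
  have hcard : Fintype.card bset = n := by
    have := Module.finrank_eq_card_basis bas
    rw [Module.finrank_fin_fun] at this
    omega
  let e0 : bset ≃ Fin n := Fintype.equivFinOfCardEq hcard
  let e : Fin n ≃ bset := (Equiv.swap i0 (e0 ⟨v, hvmem⟩)).trans e0.symm
  have he0 : (e i0 : Fin n → K) = v := by
    simp [e, Equiv.swap_apply_left]
  let c : Fin n → (Fin n → K) := fun i => (e i : Fin n → K)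
  let bc : Module.Basis (Fin n) K (Fin n → K) := bas.reindex e.symm
  have hbc : ∀ i, bc i = c i := by
    intro i
    simp [bc, c, bas, Module.Basis.mk_apply]
  let P : Matrix (Fin n) (Fin n) K := (Pi.basisFun K (Fin n)).toMatrix bc
  have hP : ∀ i j, P i j = c j i := by
    intro i j
    simp [P, Module.Basis.toMatrix, hbc]
  haveI : Invertible P := (Pi.basisFun K (Fin n)).invertibleToMatrix bc
  have hPcol : ∀ j, P *ᵥ Pi.single j 1 = c j := by
    intro j
    ext i
    simp [Matrix.mulVec_single, hP]
  -- new representation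
  refine ⟨u ᵥ* P, fun x => P⁻¹ * μ x * P, P⁻¹ *ᵥ v, ⟨?_, h.2⟩, ?_, ?_⟩
  · -- IsLinRep
    intro w
    rw [h.1 w]
    show _ = (u ᵥ* P) ⬝ᵥ (wordProd (fun x => P⁻¹ * μ x * P) w *ᵥ (P⁻¹ *ᵥ v))
    rw [wordProd_conj, Matrix.mulVec_mulVec, Matrix.dotProduct_mulVec,
      Matrix.dotProduct_mulVec, Matrix.vecMul_vecMul]
    have hPP : P * (P⁻¹ * wordProd μ w * P * P⁻¹) = wordProd μ w := by
      simp only [mul_assoc, Matrix.mul_inv_of_invertible, mul_one]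
      rw [← mul_assoc, Matrix.mul_inv_of_invertible, one_mul]
    rw [hPP]
  · -- coordinates
    intro w i
    obtain ⟨t, ht⟩ : c i ∈ T := hbT ((e i).2)
    refine ⟨w ++ t, ?_⟩
    show (u ᵥ* P ᵥ* wordProd (fun x => P⁻¹ * μ x * P) w) i = S (w ++ t)
    rw [wordProd_conj, Matrix.vecMul_vecMul]
    have hPP : P * (P⁻¹ * wordProd μ w * P) = wordProd μ w * P := by
      rw [← mul_assoc, ← mul_assoc, Matrix.mul_inv_of_invertible, one_mul]
    rw [hPP]
    have hcoord : (u ᵥ* (wordProd μ w * P)) i = (u ᵥ* wordProd μ w) ⬝ᵥ c i := by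
      rw [← Matrix.vecMul_vecMul]
      simp [Matrix.vecMul, dotProduct, hP]
    rw [hcoord, ← ht, ← Matrix.dotProduct_mulVec, Matrix.mulVec_mulVec, ← wordProd_append,
      ← h.1]
  · -- v component
    have : v = P *ᵥ Pi.single i0 1 := by rw [hPcol i0]; exact he0.symm
    rw [this, Matrix.mulVec_mulVec, Matrix.inv_mul_of_invertible, Matrix.one_mulVec]
end

section
/- Let K be a field, V a K-vector space with basis e₁, …, e_n, and Γ ⊆ K a subset. For every vector subspace W ⊆ V there exists a basis f₁, …, f_m of W such that every element of W of the form α₁e₁ + ⋯ + α_ne_n with all αᵢ ∈ Γ can be written as β₁f₁ + ⋯ + β_mf_m with all βⱼ ∈ Γ. -/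
/-- For a subspace `W` of a vector space with basis `e₁, …, e_n` there is a basis of `W`
such that every element of `W` whose coordinates w.r.t. `e` lie in `Γ` has coordinates
w.r.t. the new basis lying in `Γ`. -/
theorem subspace_basis_coords {K V : Type*} [Field K] [AddCommGroup V] [Module K V]
    {n : ℕ} (e : Module.Basis (Fin n) K V) (Γ : Set K) (W : Submodule K V) :
    ∃ (m : ℕ) (f : Fin m → V), LinearIndependent K f ∧
      Submodule.span K (Set.range f) = W ∧
      ∀ α : Fin n → K, (∀ i, α i ∈ Γ) → (∑ i, α i • e i) ∈ W →
        ∃ β : Fin m → K, (∀ j, β j ∈ Γ) ∧ (∑ j, β j • f j) = ∑ i, α i • e i := by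
  classical
  haveI : FiniteDimensional K V := Module.Finite.of_basis e
  haveI : FiniteDimensional K W := FiniteDimensional.finiteDimensional_submodule W
  -- coordinate functionals restricted to W
  set lam : Fin n → Module.Dual K W := fun i => (e.coord i).comp W.subtype with hlam
  -- they span the dual of W
  have hspan : Submodule.span K (Set.range lam) = ⊤ := by
    have h1 : Set.range lam = W.subtype.dualMap '' Set.range (e.coord) := by
      ext φ; simp [hlam, Set.range_comp, LinearMap.dualMap]
      constructor
      · rintro ⟨i, rfl⟩; exact ⟨i, rfl⟩
      · rintro ⟨i, rfl⟩; exact ⟨i, rfl⟩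
    have h2 : Submodule.span K (Set.range (e.coord)) = ⊤ := by
      have := e.dualBasis.span_eq
      rwa [show ⇑e.dualBasis = e.coord from e.coe_dualBasis] at this
    have h3 : Function.Surjective W.subtype.dualMap :=
      LinearMap.dualMap_surjective_of_injective W.injective_subtype
    rw [h1, ← Submodule.map_span, h2, Submodule.map_top, LinearMap.range_eq_top.mpr h3]
  -- extract a basis of the dual from this spanning family
  obtain ⟨b, hbt, hbspan, hbli⟩ := exists_linearIndependent K (Set.range lam)
  rw [hspan] at hbspan
  haveI hbfin : b.Finite := hbli.setFinite
  haveI := hbfin.fintype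
  set m := Fintype.card b with hm
  let eqv : Fin m ≃ b := (Fintype.equivFin b).symm
  set g : Fin m → Module.Dual K W := fun j => (eqv j : Module.Dual K W) with hg
  have hgli : LinearIndependent K g := hbli.comp _ eqv.injective
  have hgspan : Submodule.span K (Set.range g) = ⊤ := by
    have hr : Set.range g = b := by
      rw [hg, show (fun j => ((eqv j : b) : Module.Dual K W)) = Subtype.val ∘ eqv from rfl,
        Set.range_comp, Equiv.range_eq_univ, Set.image_univ, Subtype.range_coe]
    rw [hr, hbspan]
  -- g as a basis of the dual
  let bb : Module.Basis (Fin m) K (Module.Dual K W) := Module.Basis.mk hgli (le_of_eq hgspan.symm)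
  have hbbeq : ∀ j, bb j = g j := fun j => Module.Basis.mk_apply hgli _ j
  -- predual basis in W
  set f' : Fin m → W := fun j => (Module.evalEquiv K W).symm (bb.dualBasis j) with hf'
  -- pairing
  have hpair : ∀ k j, g k (f' j) = if k = j then 1 else 0 := by
    intro k j
    have := Module.apply_evalEquiv_symm_apply K W (g k) (bb.dualBasis j)
    rw [hf', this, ← hbbeq k, Module.Basis.dualBasis_apply_self]
  -- f' is a basis of W (image of dual basis under evalEquiv.symm)
  let fbasis : Module.Basis (Fin m) K W := bb.dualBasis.map (Module.evalEquiv K W).symm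
  have hfb : ∀ j, fbasis j = f' j := fun j => rfl
  -- expansion of any w in terms of f' with coefficients g j w
  have hexp : ∀ w : W, w = ∑ j, (g j w) • f' j := by
    intro w
    have hrep := fbasis.sum_repr w
    have hcoeff : ∀ k, fbasis.repr w k = g k w := by
      intro k
      conv_rhs => rw [← hrep]
      rw [map_sum]
      simp only [map_smul, hfb, hpair, smul_eq_mul, mul_ite, mul_one, mul_zero]
      simp
    calc w = ∑ j, fbasis.repr w j • fbasis j := hrep.symm
    _ = ∑ j, (g j w) • f' j := by
        refine Finset.sum_congr rfl fun j _ => ?_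
        rw [hcoeff, hfb]
  -- choose indices s with lam (s j) = g j
  have hsel : ∀ j : Fin m, ∃ i : Fin n, lam i = g j := fun j => hbt (eqv j).2
  choose s hs using hsel
  refine ⟨m, fun j => (f' j : V), ?_, ?_, ?_⟩
  · have : LinearIndependent K f' := by
      have := fbasis.linearIndependent
      simpa [funext hfb] using this
    exact this.map' W.subtype (Submodule.ker_subtype W)
  · have : Submodule.span K (Set.range f') = ⊤ := by
      have := fbasis.span_eq
      rwa [show ⇑fbasis = f' from funext hfb] at this
    rw [show Set.range (fun j => (f' j : V)) = W.subtype '' Set.range f' by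
          rw [← Set.range_comp]; rfl,
        ← Submodule.map_span, this, Submodule.map_top, Submodule.range_subtype]
  · intro α hΓ hW
    set w : W := ⟨∑ i, α i • e i, hW⟩ with hw
    refine ⟨fun j => α (s j), fun j => hΓ _, ?_⟩
    have hgw : ∀ j, g j w = α (s j) := by
      intro j
      rw [← hs j]
      have : (w : V) = e.equivFun.symm α := by
        rw [hw, Module.Basis.equivFun_symm_apply]
      simp only [hlam, LinearMap.comp_apply, Submodule.coe_subtype, this]
      rw [Module.Basis.coord_apply, ← Module.Basis.equivFun_apply,
        LinearEquiv.apply_symm_apply]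
    have := hexp w
    calc (∑ j, α (s j) • ((f' j : V))) = ((∑ j, (g j w) • f' j : W) : V) := by
          push_cast
          refine Finset.sum_congr rfl fun j _ => ?_
          rw [hgw]
    _ = (w : V) := by rw [← this]
    _ = ∑ i, α i • e i := rfl
end

section
/- Let R be a commutative ring, X a finite nonempty alphabet, and (u, μ, v) a linear representation of rank n with entries in R. Suppose there exists a collection 𝒮 of subsets of {1, …, n} whose union is {1, …, n} and such that: (1) there exists M ∈ 𝒮 containing every index ν with u_ν ≠ 0; (2) for every M ∈ 𝒮 and x ∈ X there exists N ∈ 𝒮 such that for all ν ∈ M and all j, μ(x)_{ν,j} ≠ 0 implies j ∈ N; (3) for every M ∈ 𝒮, x ∈ X and column index j, there is at most one ν ∈ M with μ(x)_{ν,j} ≠ 0; (4) for every M ∈ 𝒮 there is at most one ν ∈ M with v_ν ≠ 0. Then the linear representation (u, μ, v) is unambiguous. -/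
/-- A sufficient criterion for a linear representation to be unambiguous. -/
theorem unambiguous_criterion {R X : Type*} [CommRing R] [Fintype X] [Nonempty X]
    {n : ℕ} (u : Fin n → R) (μ : X → Matrix (Fin n) (Fin n) R) (v : Fin n → R)
    (𝒮 : Set (Set (Fin n)))
    (hcover : ∀ i : Fin n, ∃ M ∈ 𝒮, i ∈ M)
    (h1 : ∃ M ∈ 𝒮, ∀ ν : Fin n, u ν ≠ 0 → ν ∈ M)
    (h2 : ∀ M ∈ 𝒮, ∀ x : X, ∃ N ∈ 𝒮, ∀ ν ∈ M, ∀ j : Fin n, μ x ν j ≠ 0 → j ∈ N)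
    (h3 : ∀ M ∈ 𝒮, ∀ (x : X) (j : Fin n), ∀ ν ∈ M, ∀ ν' ∈ M,
      μ x ν j ≠ 0 → μ x ν' j ≠ 0 → ν = ν')
    (h4 : ∀ M ∈ 𝒮, ∀ ν ∈ M, ∀ ν' ∈ M, v ν ≠ 0 → v ν' ≠ 0 → ν = ν') :
    IsUnambiguous u μ v := by
  intro w p q hp hq
  obtain ⟨hpu, hpμ, hpv⟩ := hp
  obtain ⟨hqu, hqμ, hqv⟩ := hq
  have hM : ∀ i : Fin (w.length + 1), ∃ M ∈ 𝒮, p i ∈ M ∧ q i ∈ M := by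
    intro i
    induction i using Fin.induction with
    | zero =>
      obtain ⟨M, hM𝒮, hMu⟩ := h1
      exact ⟨M, hM𝒮, hMu _ hpu, hMu _ hqu⟩
    | succ i ih =>
      obtain ⟨M, hM𝒮, hpM, hqM⟩ := ih
      obtain ⟨N, hN𝒮, hN⟩ := h2 M hM𝒮 (w.get i)
      exact ⟨N, hN𝒮, hN _ hpM _ (hpμ i), hN _ hqM _ (hqμ i)⟩
  funext i
  induction i using Fin.reverseInduction with
  | last =>
    obtain ⟨M, hM𝒮, hpM, hqM⟩ := hM (Fin.last w.length)
    exact h4 M hM𝒮 _ hpM _ hqM hpv hqv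
  | cast i ih =>
    obtain ⟨M, hM𝒮, hpM, hqM⟩ := hM i.castSucc
    have h2' := hqμ i
    rw [← ih] at h2'
    exact h3 M hM𝒮 (w.get i) (p i.succ) _ hpM _ hqM (hpμ i) h2'
end

section
/- Let K be a field, X a finite nonempty alphabet, G a subgroup of K×, and ℓ : G → ℝ≥0 a length function (ℓ(1) = 0, ℓ(gh) ≤ ℓ(g) + ℓ(h), ℓ(g⁻¹) = ℓ(g)). Let S : X* → K be a series recognized by a deterministic linear representation (u, μ, v) such that all entries of every μ(x) for x ∈ X and all entries of v lie in G ∪ {0}, and such that S(w) ∈ G ∪ {0} for all w ∈ X*. Then S has bounded ℓ-variation: for every c ≥ 0 there exists C ≥ 0 such that for all words w, w' ∈ X* with S(w) ≠ 0 and S(w') ≠ 0, if there exist a word p and words w₁, w₂ with w = p·w₁, w' = p·w₂ and |w₁| + |w₂| ≤ c, then ℓ(S(w)·S(w')⁻¹) ≤ C. -/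
/-- A series recognized by a deterministic weighted automaton whose weights lie in
`G ∪ {0}` has bounded `ℓ`-variation for any length function `ℓ` on `G`. -/
theorem deterministic_bounded_variation {K X : Type*} [Field K] [Fintype X] [Nonempty X]
    (G : Subgroup Kˣ) (ℓ : G → NNReal)
    (hl1 : ℓ 1 = 0) (hlmul : ∀ g h : G, ℓ (g * h) ≤ ℓ g + ℓ h)
    (hlinv : ∀ g : G, ℓ g⁻¹ = ℓ g)
    (S : List X → K)
    {n : ℕ} (u : Fin n → K) (μ : X → Matrix (Fin n) (Fin n) K) (v : Fin n → K)
    (hrep : IsLinRep S u μ v) (hdet : IsDeterministic u μ)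
    (hμG : ∀ (x : X) (i j : Fin n), μ x i j = 0 ∨ ∃ g ∈ G, (g : K) = μ x i j)
    (hvG : ∀ i : Fin n, v i = 0 ∨ ∃ g ∈ G, (g : K) = v i)
    (hSG : ∀ w : List X, S w = 0 ∨ ∃ g ∈ G, (g : K) = S w) :
    ∀ c : ℕ, ∃ C : NNReal, ∀ (w w' : List X) (g g' : G),
      ((g : Kˣ) : K) = S w → ((g' : Kˣ) : K) = S w' →
      (∃ p w₁ w₂ : List X, w = p ++ w₁ ∧ w' = p ++ w₂ ∧ w₁.length + w₂.length ≤ c) →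
      ℓ (g * g'⁻¹) ≤ C := by
  classical
  intro c
  have hinj : Function.Injective (fun g : G => ((g : Kˣ) : K)) := by
    intro a b h
    exact Subtype.ext (Units.ext h)
  -- length of a coefficient
  set f : K → NNReal := fun k => if h : ∃ g : G, ((g : Kˣ) : K) = k then ℓ h.choose else 0
    with hf
  have hfeq : ∀ (g : G) (k : K), ((g : Kˣ) : K) = k → f k = ℓ g := by
    intro g k hk
    have h : ∃ g : G, ((g : Kˣ) : K) = k := ⟨g, hk⟩
    have hgc : h.choose = g := hinj (h.choose_spec.trans hk.symm)
    simp only [hf, dif_pos h, hgc]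
  set M : NNReal := (Finset.univ.sup fun p : X × Fin n × Fin n => f (μ p.1 p.2.1 p.2.2)) ⊔
      (Finset.univ.sup fun i => f (v i)) with hM
  have hμM : ∀ (x : X) (i j : Fin n) (g : G), ((g : Kˣ) : K) = μ x i j → ℓ g ≤ M := by
    intro x i j g hg
    rw [← hfeq g _ hg]
    exact le_trans (Finset.le_sup (f := fun p : X × Fin n × Fin n => f (μ p.1 p.2.1 p.2.2))
      (Finset.mem_univ (x, i, j))) le_sup_left
  have hvM : ∀ (i : Fin n) (g : G), ((g : Kˣ) : K) = v i → ℓ g ≤ M := by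
    intro i g hg
    rw [← hfeq g _ hg]
    exact le_trans (Finset.le_sup (f := fun i => f (v i)) (Finset.mem_univ i)) le_sup_right
  -- Lemma A : entries of wordProd μ w *ᵥ v are 0 or in G with controlled length
  have hA : ∀ (w : List X) (s : Fin n),
      (Matrix.mulVec (wordProd μ w) v) s = 0 ∨
      ∃ g : G, ((g : Kˣ) : K) = (Matrix.mulVec (wordProd μ w) v) s ∧
        ℓ g ≤ (w.length : NNReal) * M + M := by
    intro w
    induction w with
    | nil =>
      intro s
      simp only [wordProd, List.map_nil, List.prod_nil, Matrix.one_mulVec]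
      rcases hvG s with h0 | ⟨g, hg, hgv⟩
      · exact Or.inl h0
      · exact Or.inr ⟨⟨g, hg⟩, hgv, by simpa using hvM s ⟨g, hg⟩ hgv⟩
    | cons x w ih =>
      intro s
      have hwp : Matrix.mulVec (wordProd μ (x :: w)) v
          = Matrix.mulVec (μ x) (Matrix.mulVec (wordProd μ w) v) := by
        rw [Matrix.mulVec_mulVec]
        simp [wordProd]
      set b := Matrix.mulVec (wordProd μ w) v with hb
      by_cases hz : (Matrix.mulVec (wordProd μ (x :: w)) v) s = 0
      · exact Or.inl hz
      right
      have hsum : (Matrix.mulVec (wordProd μ (x :: w)) v) s = ∑ j, μ x s j * b j := by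
        rw [hwp]; rfl
      have hne : (∑ j, μ x s j * b j) ≠ 0 := by rw [← hsum]; exact hz
      obtain ⟨j0, -, hj0⟩ := Finset.exists_ne_zero_of_sum_ne_zero hne
      have hμne : μ x s j0 ≠ 0 := fun h => hj0 (by rw [h, zero_mul])
      have hbne : b j0 ≠ 0 := fun h => hj0 (by rw [h, mul_zero])
      have hval : (Matrix.mulVec (wordProd μ (x :: w)) v) s = μ x s j0 * b j0 := by
        rw [hsum]
        refine Finset.sum_eq_single j0 (fun j _ hj => ?_) (by simp)
        by_cases hμj : μ x s j = 0
        · rw [hμj, zero_mul]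
        · exact absurd (hdet.2 x s j j0 hμj hμne) hj
      rcases hμG x s j0 with h0 | ⟨g0, hg0, hg0v⟩
      · exact absurd h0 hμne
      rcases ih j0 with h0 | ⟨g1, hg1v, hg1l⟩
      · exact absurd h0 hbne
      refine ⟨⟨g0, hg0⟩ * g1, ?_, ?_⟩
      · rw [hval]
        push_cast
        rw [hg0v, hg1v]
      · calc ℓ (⟨g0, hg0⟩ * g1) ≤ ℓ ⟨g0, hg0⟩ + ℓ g1 := hlmul _ _
          _ ≤ M + ((w.length : NNReal) * M + M) := add_le_add (hμM x s j0 ⟨g0, hg0⟩ hg0v) hg1l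
          _ = ((w.length : NNReal) + 1) * M + M := by ring
          _ = ((x :: w).length : NNReal) * M + M := by
              push_cast [List.length_cons]
              ring
  -- Lemma C : u ᵥ* wordProd μ p has at most one nonzero coordinate
  have hC : ∀ p : List X, ∀ i j : Fin n,
      (Matrix.vecMul u (wordProd μ p)) i ≠ 0 → (Matrix.vecMul u (wordProd μ p)) j ≠ 0 → i = j := by
    intro p
    induction p using List.reverseRecOn with
    | nil =>
      simp only [wordProd, List.map_nil, List.prod_nil, Matrix.vecMul_one]
      exact hdet.1
    | append_singleton p x ih =>
      intro i j hi hj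
      have hwp : Matrix.vecMul u (wordProd μ (p ++ [x]))
          = Matrix.vecMul (Matrix.vecMul u (wordProd μ p)) (μ x) := by
        rw [Matrix.vecMul_vecMul]
        simp [wordProd]
      set r := Matrix.vecMul u (wordProd μ p) with hr
      have hsum : ∀ k, (Matrix.vecMul u (wordProd μ (p ++ [x]))) k = ∑ i, r i * μ x i k := by
        intro k; rw [hwp]; rfl
      rw [hsum] at hi hj
      obtain ⟨a, -, ha⟩ := Finset.exists_ne_zero_of_sum_ne_zero hi
      obtain ⟨b, -, hb⟩ := Finset.exists_ne_zero_of_sum_ne_zero hj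
      have hra : r a ≠ 0 := fun h => ha (by rw [h, zero_mul])
      have hrb : r b ≠ 0 := fun h => hb (by rw [h, zero_mul])
      have hab : a = b := ih a b hra hrb
      subst hab
      have hμa : μ x a i ≠ 0 := fun h => ha (by rw [h, mul_zero])
      have hμb : μ x a j ≠ 0 := fun h => hb (by rw [h, mul_zero])
      exact hdet.2 x a i j hμa hμb
  refine ⟨(c : NNReal) * M + (M + M), ?_⟩
  rintro w w' g g' hg hg' ⟨p, w₁, w₂, hw, hw', hlen⟩
  set r := Matrix.vecMul u (wordProd μ p) with hr
  have hsplit : ∀ w₀ : List X, S (p ++ w₀) = ∑ s, r s * (Matrix.mulVec (wordProd μ w₀) v) s := by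
    intro w₀
    rw [hrep]
    have : wordProd μ (p ++ w₀) = wordProd μ p * wordProd μ w₀ := by simp [wordProd]
    rw [this, ← Matrix.mulVec_mulVec, Matrix.dotProduct_mulVec]
    rfl
  have hSw : S w = ∑ s, r s * (Matrix.mulVec (wordProd μ w₁) v) s := by rw [hw]; exact hsplit w₁
  have hSw' : S w' = ∑ s, r s * (Matrix.mulVec (wordProd μ w₂) v) s := by rw [hw']; exact hsplit w₂
  have hSwne : S w ≠ 0 := by rw [← hg]; exact Units.ne_zero _
  have hSw'ne : S w' ≠ 0 := by rw [← hg']; exact Units.ne_zero _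
  obtain ⟨s, -, hs⟩ := Finset.exists_ne_zero_of_sum_ne_zero (hSw ▸ hSwne)
  obtain ⟨s', -, hs'⟩ := Finset.exists_ne_zero_of_sum_ne_zero (hSw' ▸ hSw'ne)
  have hrs : r s ≠ 0 := fun h => hs (by rw [h, zero_mul])
  have hrs' : r s' ≠ 0 := fun h => hs' (by rw [h, zero_mul])
  have hss' : s = s' := hC p s s' hrs hrs'
  subst hss'
  set a := (Matrix.mulVec (wordProd μ w₁) v) s with hav
  set b := (Matrix.mulVec (wordProd μ w₂) v) s with hbv
  have hane : a ≠ 0 := fun h => hs (by rw [h, mul_zero])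
  have hbne : b ≠ 0 := fun h => hs' (by rw [h, mul_zero])
  have hSwval : S w = r s * a := by
    rw [hSw]
    refine Finset.sum_eq_single s (fun j _ hj => ?_) (by simp)
    by_cases hrj : r j = 0
    · rw [hrj, zero_mul]
    · exact absurd (hC p j s hrj hrs) hj
  have hSw'val : S w' = r s * b := by
    rw [hSw']
    refine Finset.sum_eq_single s (fun j _ hj => ?_) (by simp)
    by_cases hrj : r j = 0
    · rw [hrj, zero_mul]
    · exact absurd (hC p j s hrj hrs) hj
  rcases hA w₁ s with h0 | ⟨ga, hgav, hgal⟩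
  · exact absurd h0 hane
  rcases hA w₂ s with h0 | ⟨gb, hgbv, hgbl⟩
  · exact absurd h0 hbne
  have hbK : ((gb : Kˣ) : K) ≠ 0 := Units.ne_zero _
  have key : g * g'⁻¹ = ga * gb⁻¹ := by
    apply hinj
    simp only [Subgroup.coe_mul, InvMemClass.coe_inv, Units.val_mul, Units.val_inv_eq_inv_val]
    rw [hg, hg', hgav, hgbv, hSwval, hSw'val]
    rw [← hav, ← hbv]
    field_simp
  calc ℓ (g * g'⁻¹) = ℓ (ga * gb⁻¹) := by rw [key]
    _ ≤ ℓ ga + ℓ gb⁻¹ := hlmul _ _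
    _ = ℓ ga + ℓ gb := by rw [hlinv]
    _ ≤ ((w₁.length : NNReal) * M + M) + ((w₂.length : NNReal) * M + M) := add_le_add hgal hgbl
    _ = ((w₁.length : NNReal) + (w₂.length : NNReal)) * M + (M + M) := by ring
    _ ≤ (c : NNReal) * M + (M + M) := by
        refine add_le_add_left (mul_le_mul_left ?_ M) _
        exact_mod_cast hlen
end
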